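/- arXiv:2508.11973 — 5 statements merged into one kernel-verified Lean document; each statement's English description precedes it below -/
import Mathlib

section
/- Let Z be the free abelian group with basis {z_i : i ∈ ℤ}. For a finite abelian group context, let A be an abelian group and for even m and odd n define f_{m,n} : Z → ⟨a_n⟩ by f_{m,n}(z) = a_n^{k}, where k is the exponent of z_m in the canonical decomposition of z, and let f̃_n : Z → ⟨a_n⟩ be the constant function with value a_n. Then in the group of functions Z → A with pointwise multiplication, extended by the translation action of Z (i.e., inside the unrestricted wreath product A Wr Z), for even k, m, odd n, and all integers p, q, the commutator [z_k^p, (f_{m,n})^q] equals 1 if k ≠ m, and equals (f̃_n)^{pq} if k = m. -/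
/- The free abelian group `Z` with basis `{z_i : i ∈ ℤ}`, realized as `ℤ →₀ ℤ`
   (with `z i = Finsupp.single i 1`), and the unrestricted wreath product
   `A Wr Z`, realized as the semidirect product of the group of functions
   `Z → A` (pointwise multiplication) with `Multiplicative Z`, acting by
   `(z' • f) z = f (z + z')`. -/

abbrev ZB : Type := ℤ →₀ ℤ

/-- The shift automorphism `f ↦ (z ↦ f (z + t))` of the group of functions `Z → A`. -/
noncomputable def shiftEquiv {A : Type*} [CommGroup A] (t : ZB) : (ZB → A) ≃* (ZB → A) where
  toFun f := fun z => f (z + t)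
  invFun f := fun z => f (z - t)
  left_inv f := by funext z; simp
  right_inv f := by funext z; simp
  map_mul' f g := rfl

/-- The translation action of `Z` on `Z → A`. -/
noncomputable def wAct (A : Type*) [CommGroup A] : Multiplicative ZB →* MulAut (ZB → A) where
  toFun t := shiftEquiv (Multiplicative.toAdd t)
  map_one' := by
    apply MulEquiv.ext; intro f; funext z; simp [shiftEquiv]
  map_mul' x y := by
    apply MulEquiv.ext; intro f; funext z; simp [shiftEquiv, add_assoc]

/-- The unrestricted wreath product `A Wr Z`. -/
abbrev WreathZ (A : Type*) [CommGroup A] : Type _ :=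
  SemidirectProduct (ZB → A) (Multiplicative ZB) (wAct A)

/-- The basis element `z_k` of `Z`, viewed inside `A Wr Z`. -/
noncomputable def zElt (A : Type*) [CommGroup A] (k : ℤ) : WreathZ A :=
  SemidirectProduct.inr (Multiplicative.ofAdd (Finsupp.single k 1))

/-- `f_{m,n} : Z → ⟨a_n⟩`, `f_{m,n}(z) = a_n ^ |z|_{z_m}`. -/
def fmn {A : Type*} [CommGroup A] (a : ℤ → A) (m n : ℤ) : ZB → A :=
  fun z => a n ^ (z m)

/-- The constant function `f̃_n : Z → ⟨a_n⟩` with value `a_n`. -/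
def ftil {A : Type*} [CommGroup A] (a : ℤ → A) (n : ℤ) : ZB → A :=
  fun _ => a n

open scoped commutatorElement

/-- Property 2.1. For even `k, m`, odd `n` and all integers
`p, q`, inside `A Wr Z` one has `[z_k^p, (f_{m,n})^q] = 1` if `k ≠ m` and
`[z_k^p, (f_{m,n})^q] = (f̃_n)^{pq}` if `k = m`. -/
theorem commutator_zpow_fmn {A : Type*} [CommGroup A] (a : ℤ → A)
    (k m n : ℤ) (hk : Even k) (hm : Even m) (hn : Odd n) (p q : ℤ) :
    ⁅(zElt A k) ^ p, (SemidirectProduct.inl (fmn a m n) : WreathZ A) ^ q⁆ =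
      if k = m then (SemidirectProduct.inl (ftil a n) : WreathZ A) ^ (p * q)
      else 1 := by
  have hr : (zElt A k) ^ p =
      SemidirectProduct.inr ((Multiplicative.ofAdd (Finsupp.single k (1:ℤ))) ^ p) := by
    rw [zElt, ← map_zpow]
  have hl : (SemidirectProduct.inl (fmn a m n) : WreathZ A) ^ q =
      SemidirectProduct.inl ((fmn a m n) ^ q) := (map_zpow _ _ _).symm
  set s : Multiplicative ZB := (Multiplicative.ofAdd (Finsupp.single k (1:ℤ))) ^ p with hs
  set f : ZB → A := (fmn a m n) ^ q with hf
  have key : ⁅(zElt A k) ^ p, (SemidirectProduct.inl (fmn a m n) : WreathZ A) ^ q⁆ =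
      SemidirectProduct.inl ((wAct A s f) * f⁻¹) := by
    rw [hr, hl, commutatorElement_def, map_mul, SemidirectProduct.inl_aut, map_inv]
    simp [mul_assoc]
  rw [key]
  have hsad : Multiplicative.toAdd s = Finsupp.single k p := by
    rw [hs, toAdd_zpow, toAdd_ofAdd, Finsupp.smul_single, smul_eq_mul, mul_one]
  have hval : ∀ z : ZB, (wAct A s f * f⁻¹) z
      = a n ^ ((z m + (Finsupp.single k p) m) * q) * (a n ^ (z m * q))⁻¹ := by
    intro z
    simp [wAct, shiftEquiv, hsad, hf, fmn, ← zpow_mul]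
  by_cases hkm : k = m
  · subst hkm
    rw [if_pos rfl, ← map_zpow]
    congr 1
    funext z
    rw [hval, Finsupp.single_eq_same, ← zpow_neg, ← zpow_add]
    have : (ftil a n ^ (p * q)) z = a n ^ (p * q) := by
      simp [ftil]
    rw [this]
    congr 1
    ring
  · rw [if_neg hkm]
    rw [show (1 : WreathZ A) = SemidirectProduct.inl 1 from (map_one _).symm]
    congr 1
    funext z
    rw [hval, Finsupp.single_eq_of_ne (Ne.symm hkm)]
    simp
end

section
/- With notation as in the construction of the groups G_A: inside A Wr Z, for even m and odd n define f̄_n : Z → A by f̄_n(z) = ∏_{i ∈ supp(z)} a_{n-i}^{|z|_{z_i}}, and f̃_n the constant function with value a_n. Then [z_m, f̄_n] = f̃_{n-m}, [z_m^{-1}, f̄_n] = [z_m, f̄_n^{-1}] = (f̃_{n-m})^{-1}, and [z_m, f̃_n] = 1. -/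
/-- `f̄_n : Z → A`, `f̄_n(z) = ∏_{i ∈ supp z} a_{n-i} ^ |z|_{z_i}`. -/
def fbar {A : Type*} [CommGroup A] (a : ℤ → A) (n : ℤ) : ZB → A :=
  fun z => z.prod fun i e => a (n - i) ^ e

open scoped commutatorElement

lemma fbar_add {A : Type*} [CommGroup A] (a : ℤ → A) (n : ℤ) (z w : ZB) :
    fbar a n (z + w) = fbar a n z * fbar a n w := by
  simp only [fbar]
  exact Finsupp.prod_add_index' (fun i => zpow_zero _) (fun i b c => zpow_add _ _ _)

lemma fbar_single {A : Type*} [CommGroup A] (a : ℤ → A) (n m : ℤ) :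
    fbar a n (Finsupp.single m 1) = a (n - m) := by
  simp only [fbar]
  exact (Finsupp.prod_single_index (h := fun i e => a (n - i) ^ e) (zpow_zero _)).trans (zpow_one _)

lemma comm_inr_inl {A : Type*} [CommGroup A] (t : Multiplicative ZB) (f : ZB → A) :
    ⁅(SemidirectProduct.inr t : WreathZ A), (SemidirectProduct.inl f : WreathZ A)⁆ =
      SemidirectProduct.inl ((wAct A t f) * f⁻¹) := by
  rw [commutatorElement_def, ← map_inv, ← map_inv, ← SemidirectProduct.inl_aut, ← map_mul]

lemma fbar_zero {A : Type*} [CommGroup A] (a : ℤ → A) (n : ℤ) : fbar a n 0 = 1 := by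
  simp [fbar]

lemma fbar_neg {A : Type*} [CommGroup A] (a : ℤ → A) (n : ℤ) (z : ZB) :
    fbar a n (-z) = (fbar a n z)⁻¹ := by
  have h := fbar_add a n z (-z)
  rw [add_neg_cancel, fbar_zero] at h
  exact eq_inv_of_mul_eq_one_right h.symm

/-- Property 2.2. For even `m` and odd `n`, inside `A Wr Z`:
`[z_m, f̄_n] = f̃_{n-m}`, `[z_m⁻¹, f̄_n] = [z_m, f̄_n⁻¹] = (f̃_{n-m})⁻¹`, and
`[z_m, f̃_n] = 1`. -/
theorem commutator_z_fbar {A : Type*} [CommGroup A] (a : ℤ → A)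
    (m n : ℤ) (hm : Even m) (hn : Odd n) :
    ⁅zElt A m, (SemidirectProduct.inl (fbar a n) : WreathZ A)⁆ =
        SemidirectProduct.inl (ftil a (n - m)) ∧
    ⁅(zElt A m)⁻¹, (SemidirectProduct.inl (fbar a n) : WreathZ A)⁆ =
        (SemidirectProduct.inl (ftil a (n - m)) : WreathZ A)⁻¹ ∧
    ⁅zElt A m, (SemidirectProduct.inl (fbar a n) : WreathZ A)⁻¹⁆ =
        (SemidirectProduct.inl (ftil a (n - m)) : WreathZ A)⁻¹ ∧
    ⁅zElt A m, (SemidirectProduct.inl (ftil a n) : WreathZ A)⁆ = 1 := by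
  refine ⟨?_, ?_, ?_, ?_⟩
  · rw [zElt, comm_inr_inl]
    congr 1
    funext z
    show fbar a n (z + Finsupp.single m 1) * (fbar a n z)⁻¹ = a (n - m)
    rw [fbar_add, fbar_single, mul_comm (fbar a n z), mul_inv_cancel_right]
  · rw [zElt, ← map_inv SemidirectProduct.inr, comm_inr_inl,
      ← map_inv (SemidirectProduct.inl (φ := wAct A))]
    congr 1
    funext z
    show fbar a n (z + -Finsupp.single m 1) * (fbar a n z)⁻¹ = (a (n - m))⁻¹
    rw [fbar_add, fbar_neg, fbar_single, mul_comm (fbar a n z), mul_inv_cancel_right]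
  · rw [zElt, ← map_inv (SemidirectProduct.inl (φ := wAct A)), comm_inr_inl,
      ← map_inv (SemidirectProduct.inl (φ := wAct A))]
    congr 1
    funext z
    show (fbar a n (z + Finsupp.single m 1))⁻¹ * ((fbar a n)⁻¹)⁻¹ z = (a (n - m))⁻¹
    show (fbar a n (z + Finsupp.single m 1))⁻¹ * (((fbar a n z)⁻¹)⁻¹) = (a (n - m))⁻¹
    rw [fbar_add, fbar_single, mul_inv_rev, inv_inv, inv_mul_cancel_right]
  · rw [zElt, comm_inr_inl]
    have h : wAct A (Multiplicative.ofAdd (Finsupp.single m 1)) (ftil a n) * (ftil a n)⁻¹ = 1 := by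
      funext z
      simp [wAct, shiftEquiv, ftil]
    rw [h, map_one]
end

section
/- Let L_p = (ℤ/pℤ) wr ℤ be the lamplighter group, the restricted wreath product of the cyclic group of order p by ℤ, generated by a (a generator of the base copy of ℤ/pℤ at position 0) and b (the generator of the acting ℤ). Then the residual finiteness growth function of L_p with respect to {a, b} satisfies rf_{L_p,{a,b}}(n) ≤ 4 p² (n+1)². -/
/-- The shift by `t` on the base group `⊕_{i ∈ ℤ} ℤ/pℤ` of the lamplighter
group, as a multiplicative automorphism. -/
noncomputable def lampShift (p : ℕ) (t : ℤ) :
    Multiplicative (ℤ →₀ ZMod p) ≃* Multiplicative (ℤ →₀ ZMod p) :=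
  AddEquiv.toMultiplicative (Finsupp.domCongr (Equiv.addRight t).symm)

/-- The shift action of `ℤ` on the base group of the lamplighter group. -/
noncomputable def lampAct (p : ℕ) :
    Multiplicative ℤ →* MulAut (Multiplicative (ℤ →₀ ZMod p)) where
  toFun t := lampShift p (Multiplicative.toAdd t)
  map_one' := by
    apply MulEquiv.ext; intro f
    apply Multiplicative.toAdd.injective
    ext i
    simp [lampShift]
  map_mul' x y := by
    apply MulEquiv.ext; intro f
    apply Multiplicative.toAdd.injective
    ext i
    simp [lampShift, add_assoc]

/-- The lamplighter group `L_p = (ℤ/pℤ) wr ℤ`, the restricted wreath product of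
the cyclic group of order `p` by `ℤ`. -/
abbrev Lamp (p : ℕ) : Type :=
  SemidirectProduct (Multiplicative (ℤ →₀ ZMod p)) (Multiplicative ℤ) (lampAct p)

/-- The generator `a` of `L_p`: the base element supported at `0` with value `1`. -/
noncomputable def lampA (p : ℕ) : Lamp p :=
  SemidirectProduct.inl (Multiplicative.ofAdd (Finsupp.single (0 : ℤ) (1 : ZMod p)))

/-- The generator `b` of `L_p`: the generator of the acting copy of `ℤ`. -/
noncomputable def lampB (p : ℕ) : Lamp p :=
  SemidirectProduct.inr (Multiplicative.ofAdd (1 : ℤ))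

/-- The residual finiteness depth of `g`: the least index of a finite-index
normal subgroup of `G` not containing `g` (and `0` if none exists). -/
noncomputable def rfDepth {G : Type*} [Group G] (g : G) : ℕ :=
  sInf { d : ℕ | d ≠ 0 ∧ ∃ N : Subgroup G, N.Normal ∧ g ∉ N ∧ N.index = d }

/-- Word length of `g` with respect to a generating set `X` (using `X ∪ X⁻¹`). -/
noncomputable def wordLength {G : Type*} [Group G] (X : Set G) (g : G) : ℕ :=
  sInf { n : ℕ | ∃ l : List G, (∀ x ∈ l, x ∈ X ∨ x⁻¹ ∈ X) ∧ l.length = n ∧ l.prod = g }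

/-- The residual finiteness growth function `rf_{G,X}`. -/
noncomputable def rfGrowth {G : Type*} [Group G] (X : Set G) (n : ℕ) : ℕ :=
  sSup { d : ℕ | ∃ g : G, g ≠ 1 ∧ wordLength X g ≤ n ∧ rfDepth g = d }

/-- `G` is residually finite. -/
def ResiduallyFinite (G : Type*) [Group G] : Prop :=
  ∀ g : G, g ≠ 1 → ∃ N : Subgroup G, N.Normal ∧ N.index ≠ 0 ∧ g ∉ N

section Aux

open SemidirectProduct Multiplicative

variable {p : ℕ}

lemma lamp_shift_apply (t : ℤ) (f : Multiplicative (ℤ →₀ ZMod p)) (i : ℤ) :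
    Multiplicative.toAdd (lampAct p (ofAdd t) f) i = Multiplicative.toAdd f (i + t) := by
  rfl

lemma lampA_inv (p : ℕ) :
    (lampA p)⁻¹ = inl (ofAdd (Finsupp.single (0 : ℤ) (-1 : ZMod p))) := by
  rw [lampA, ← map_inv]
  congr 1
  rw [← ofAdd_neg, ← Finsupp.single_neg]

lemma lampB_inv (p : ℕ) : (lampB p)⁻¹ = inr (ofAdd (-1 : ℤ)) := by
  rw [lampB, ← map_inv, ← ofAdd_neg]

/-- Word-length bound: a product of `m` generators has cursor within `m`
and lamps within distance `m` of the origin. -/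
lemma lamp_word_bound (l : List (Lamp p))
    (hl : ∀ x ∈ l, x ∈ ({lampA p, lampB p} : Set (Lamp p)) ∨
      x⁻¹ ∈ ({lampA p, lampB p} : Set (Lamp p))) :
    |Multiplicative.toAdd (l.prod).right| ≤ (l.length : ℤ) ∧
      ∀ i : ℤ, (l.length : ℤ) < |i| → Multiplicative.toAdd (l.prod).left i = 0 := by
  induction l with
  | nil => simp
  | cons x l ih =>
    obtain ⟨ihr, ihl⟩ := ih (fun y hy => hl y (List.mem_cons_of_mem x hy))
    have hx := hl x List.mem_cons_self
    have hx' : (∃ c : ZMod p, x = inl (ofAdd (Finsupp.single (0 : ℤ) c))) ∨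
        (∃ e : ℤ, |e| ≤ 1 ∧ x = inr (ofAdd e)) := by
      rcases hx with (h | h) | (h | h)
      · exact Or.inl ⟨1, h⟩
      · exact Or.inr ⟨1, by norm_num, h⟩
      · exact Or.inl ⟨-1, by rw [← lampA_inv, ← h, inv_inv]⟩
      · exact Or.inr ⟨-1, by norm_num, by rw [← lampB_inv, ← h, inv_inv]⟩
    rcases hx' with ⟨c, rfl⟩ | ⟨e, he, rfl⟩
    · constructor
      · rw [List.prod_cons]
        simp only [mul_right, right_inl, one_mul, List.length_cons]
        exact ihr.trans (by push_cast; linarith)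
      · intro i hi
        have h0 : (0:ℤ) < |i| := by
          have : (0:ℤ) ≤ (l.length : ℤ) + 1 := by positivity
          simp only [List.length_cons] at hi
          push_cast at hi
          linarith
        have hi' : (l.length : ℤ) < |i| := by
          simp only [List.length_cons] at hi; push_cast at hi; linarith
        have hne : i ≠ 0 := fun h => by simp [h] at h0
        rw [List.prod_cons]
        simp only [mul_left, left_inl, right_inl, map_one, MulAut.one_apply, toAdd_mul,
          Finsupp.add_apply]
        rw [ihl i hi']
        simp only [toAdd_ofAdd, add_zero, Finsupp.single_apply_eq_zero]
        exact fun h => (hne h).elim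
    · constructor
      · rw [List.prod_cons]
        simp only [mul_right, right_inr, List.length_cons, toAdd_mul]
        push_cast
        calc |toAdd (ofAdd e) + toAdd (l.prod).right| ≤ |toAdd (ofAdd e)| + |toAdd (l.prod).right| := abs_add_le _ _
        _ ≤ 1 + l.length := by simp only [toAdd_ofAdd]; exact add_le_add he ihr
        _ = (l.length : ℤ) + 1 := by ring
      · intro i hi
        rw [List.prod_cons]
        simp only [mul_left, left_inr, one_mul, right_inr, List.length_cons] at *
        rw [lamp_shift_apply]
        apply ihl
        push_cast at hi
        have := abs_add_le (i + e) (-e)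
        simp only [add_neg_cancel_right] at this
        have : |i| ≤ |i + e| + 1 := by
          calc |i| ≤ |i + e| + |(-e)| := this
          _ ≤ |i + e| + 1 := by rw [abs_neg]; linarith
        linarith

end Aux

section Gen

open SemidirectProduct Multiplicative

lemma lamp_closure_eq_top (p : ℕ) (hp : p.Prime) :
    Subgroup.closure ({lampA p, lampB p} : Set (Lamp p)) = ⊤ := by
  haveI := Fact.mk hp
  rw [eq_top_iff]
  intro g _
  set X : Set (Lamp p) := {lampA p, lampB p}
  have hb : ∀ t : ℤ, (inr (ofAdd t) : Lamp p) ∈ Subgroup.closure X := by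
    intro t
    have : (inr (ofAdd t) : Lamp p) = (lampB p) ^ t := by
      rw [lampB, ← map_zpow]
      congr 1
      rw [← ofAdd_zsmul, smul_eq_mul, mul_one]
    rw [this]
    exact zpow_mem (Subgroup.subset_closure (by simp [X])) t
  have ha0 : ∀ c : ZMod p, (inl (ofAdd (Finsupp.single (0:ℤ) c)) : Lamp p)
      ∈ Subgroup.closure X := by
    intro c
    have : (lampA p) ^ (c.val) = (inl (ofAdd (Finsupp.single (0:ℤ) c)) : Lamp p) := by
      rw [lampA, ← map_pow]
      congr 1
      rw [← ofAdd_nsmul, Finsupp.smul_single, nsmul_eq_mul, mul_one, ZMod.natCast_val,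
        ZMod.cast_id]
    rw [← this]
    exact pow_mem (Subgroup.subset_closure (by simp [X])) _
  have ha : ∀ (i : ℤ) (c : ZMod p), (inl (ofAdd (Finsupp.single i c)) : Lamp p)
      ∈ Subgroup.closure X := by
    intro i c
    have hshift : (lampAct p) (ofAdd (-i)) (ofAdd (Finsupp.single (0:ℤ) c))
        = ofAdd (Finsupp.single i c) := by
      rw [show ((lampAct p) (ofAdd (-i)) (ofAdd (Finsupp.single (0:ℤ) c)))
          = ofAdd (Finsupp.equivMapDomain (Equiv.addRight (-i : ℤ)).symm
            (Finsupp.single (0:ℤ) c)) from rfl]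
      congr 1
      rw [Finsupp.equivMapDomain_single]
      congr 1
      simp
    have := inl_aut (φ := lampAct p) (ofAdd (-i)) (ofAdd (Finsupp.single (0:ℤ) c))
    rw [hshift] at this
    rw [this]
    exact mul_mem (mul_mem (hb _) (ha0 c)) (by rw [← ofAdd_neg, neg_neg]; exact hb i : (inr ((ofAdd (-i : ℤ))⁻¹) : Lamp p) ∈ Subgroup.closure X)
  have hl : ∀ f : ℤ →₀ ZMod p, (inl (ofAdd f) : Lamp p) ∈ Subgroup.closure X := by
    intro f
    induction f using Finsupp.induction with
    | zero => simpa using Subgroup.one_mem _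
    | single_add i c f _ _ ih =>
      rw [ofAdd_add, map_mul]
      exact mul_mem (ha i c) ih
  have h2 := mul_mem (hl (toAdd g.left)) (hb (toAdd g.right))
  rw [ofAdd_toAdd, ofAdd_toAdd, inl_left_mul_inr_right] at h2
  exact h2

end Gen

section Detect

open SemidirectProduct Multiplicative

variable (p : ℕ) (F : Type) [Field F] [Algebra (ZMod p) F] (u : Fˣ)

/-- Evaluation of (the Laurent polynomial attached to) a base element at the unit `u`. -/
noncomputable def lampP : (ℤ →₀ ZMod p) →+ F :=
  Finsupp.liftAddHom fun i =>
    (AddMonoidHom.mulRight ((u ^ i : Fˣ) : F)).comp (algebraMap (ZMod p) F).toAddMonoidHom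

lemma lampP_apply (f : ℤ →₀ ZMod p) :
    lampP p F u f = f.sum fun i c => algebraMap (ZMod p) F c * ((u ^ i : Fˣ) : F) := by
  simp [lampP, Finsupp.liftAddHom_apply]
  rfl

lemma lampP_shift (t : ℤ) (f : ℤ →₀ ZMod p) :
    lampP p F u (Finsupp.equivMapDomain (Equiv.addRight t).symm f)
      = ((u ^ (-t) : Fˣ) : F) * lampP p F u f := by
  rw [Finsupp.equivMapDomain_eq_mapDomain, lampP_apply, lampP_apply,
    Finsupp.sum_mapDomain_index (by simp) (by intros; rw [map_add, add_mul]),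
    Finsupp.mul_sum]
  apply Finsupp.sum_congr
  intro i _
  show algebraMap (ZMod p) F (f i) * ((u ^ ((Equiv.addRight t).symm i) : Fˣ) : F)
    = ((u ^ (-t) : Fˣ) : F) * (algebraMap (ZMod p) F (f i) * ((u ^ i : Fˣ) : F))
  have : (Equiv.addRight t).symm i = i - t := rfl
  rw [this, zpow_sub, zpow_neg]
  push_cast
  ring

/-- The base-to-affine-permutations map. -/
noncomputable def lampF₁ : Multiplicative (ℤ →₀ ZMod p) →* Equiv.Perm F where
  toFun f := Equiv.addLeft (lampP p F u (toAdd f))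
  map_one' := by ext x; simp
  map_mul' f g := by ext x; simp [add_assoc]

/-- The full homomorphism from the lamplighter group to permutations of `F`,
sending `(f, t)` to `x ↦ P_f(u) + u⁻ᵗ x`. -/
noncomputable def lampHom : Lamp p →* Equiv.Perm F :=
  SemidirectProduct.lift (lampF₁ p F u)
    ((MulAction.toPermHom Fˣ F).comp (zpowersHom Fˣ u⁻¹))
    (by
      intro h
      refine MonoidHom.ext fun f => Equiv.ext fun x => ?_
      show lampP p F u (toAdd ((lampAct p h) f)) + x = _
      have h1 : toAdd ((lampAct p h) f)
          = Finsupp.equivMapDomain (Equiv.addRight (toAdd h)).symm (toAdd f) := rfl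
      rw [h1, lampP_shift]
      show ((u ^ (-(toAdd h)) : Fˣ) : F) * lampP p F u (toAdd f) + x
        = (u⁻¹ ^ (toAdd h) : Fˣ) • (lampP p F u (toAdd f) + (u⁻¹ ^ (toAdd h) : Fˣ)⁻¹ • x)
      rw [inv_zpow, ← zpow_neg]
      rw [smul_add, Units.smul_def, Units.smul_def, smul_eq_mul, smul_eq_mul]
      congr 1
      rw [Units.smul_def, smul_eq_mul, ← mul_assoc, ← Units.val_mul, mul_inv_cancel,
        Units.val_one, one_mul])

lemma lampHom_apply (g : Lamp p) (x : F) :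
    lampHom p F u g x
      = lampP p F u (toAdd g.left) + ((u ^ (-(toAdd g.right)) : Fˣ) : F) * x := by
  show (lampF₁ p F u g.left * ((MulAction.toPermHom Fˣ F).comp (zpowersHom Fˣ u⁻¹)) g.right) x = _
  show lampP p F u (toAdd g.left) + (u⁻¹ ^ (toAdd g.right) : Fˣ) • x = _
  rw [inv_zpow, ← zpow_neg, Units.smul_def, smul_eq_mul]

end Detect

section Main

open SemidirectProduct Multiplicative Polynomial

lemma lamp_pow_exists (p n : ℕ) (hp : 1 < p) :
    ∃ k : ℕ, k ≠ 0 ∧ 2 * n + 2 ≤ p ^ k ∧ p ^ k ≤ 2 * p * (n + 1) := by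
  have hex : ∃ k : ℕ, 2 * n + 2 ≤ p ^ k :=
    ⟨2 * n + 2, le_of_lt (Nat.lt_pow_self hp)⟩
  set k := Nat.find hex with hk
  have hk1 : 2 * n + 2 ≤ p ^ k := Nat.find_spec hex
  have hk0 : k ≠ 0 := by
    intro h
    rw [h, pow_zero] at hk1; omega
  refine ⟨k, hk0, hk1, ?_⟩
  match hkk : k, hk0 with
  | 1, _ => rw [pow_one]; nlinarith
  | (j+2), _ =>
    have hj := Nat.find_min hex (by omega : j + 1 < k)
    push_neg at hj
    have : p ^ (j + 2) = p * p ^ (j + 1) := by ring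
    rw [this]
    calc p * p ^ (j+1) ≤ p * (2*n+1) := by
          exact Nat.mul_le_mul_left p (by omega)
    _ ≤ 2 * p * (n+1) := by nlinarith

lemma lamp_detect_base (p : ℕ) (hp : p.Prime) (n : ℕ) (g : Lamp p)
    (hf : ∀ i : ℤ, (n : ℤ) < |i| → Multiplicative.toAdd g.left i = 0)
    (hne : Multiplicative.toAdd g.left ≠ 0) :
    ∃ N : Subgroup (Lamp p), N.Normal ∧ g ∉ N ∧ N.index ≠ 0 ∧
      N.index ≤ 4 * p ^ 2 * (n + 1) ^ 2 := by
  haveI := Fact.mk hp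
  obtain ⟨k, hk0, hklb, hkub⟩ := lamp_pow_exists p n hp.one_lt
  set F := GaloisField p k with hF
  haveI : Fintype F := Fintype.ofFinite F
  haveI : DecidableEq F := Classical.decEq F
  set f : ℤ →₀ ZMod p := Multiplicative.toAdd g.left with hfdef
  have hsupp : ∀ i ∈ f.support, -(n : ℤ) ≤ i ∧ i ≤ n := by
    intro i hi
    have h1 : ¬((n : ℤ) < |i|) := fun h => (Finsupp.mem_support_iff.1 hi) (hf i h)
    rw [not_lt] at h1
    exact abs_le.1 h1
  set Q : Polynomial F := ∑ i ∈ f.support,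
    Polynomial.C (algebraMap (ZMod p) F (f i)) * Polynomial.X ^ (i + n).toNat with hQ
  obtain ⟨i₀, hi₀⟩ := Finsupp.support_nonempty_iff.2 hne
  have htoNat : ∀ i ∈ f.support, ((i + n).toNat : ℤ) = i + n := by
    intro i hi
    exact Int.toNat_of_nonneg (by linarith [(hsupp i hi).1])
  have hQcoeff : Q.coeff ((i₀ + n).toNat) = algebraMap (ZMod p) F (f i₀) := by
    rw [hQ, Polynomial.finset_sum_coeff]
    rw [Finset.sum_eq_single i₀]
    · rw [Polynomial.coeff_C_mul_X_pow, if_pos rfl]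
    · intro i hi hne'
      rw [Polynomial.coeff_C_mul_X_pow, if_neg]
      intro hEq
      apply hne'
      have := congrArg (fun m : ℕ => (m : ℤ)) hEq
      simp only [htoNat i hi, htoNat i₀ hi₀] at this
      omega
    · intro h; exact absurd hi₀ h
  have halg : Function.Injective (algebraMap (ZMod p) F) := (algebraMap (ZMod p) F).injective
  have hQ0 : Q ≠ 0 := by
    intro h
    have : algebraMap (ZMod p) F (f i₀) = 0 := by rw [← hQcoeff, h, Polynomial.coeff_zero]
    exact Finsupp.mem_support_iff.1 hi₀ (halg (by rw [this, map_zero]))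
  have hdeg : Q.natDegree ≤ 2 * n := by
    apply Polynomial.natDegree_sum_le_of_forall_le
    intro i hi
    refine (Polynomial.natDegree_C_mul_le _ _).trans ?_
    rw [Polynomial.natDegree_X_pow]
    rw [Int.toNat_le]
    push_cast
    linarith [(hsupp i hi).2]
  have hcardF : Nat.card F = p ^ k := GaloisField.card p k hk0
  set bad : Finset F := insert 0 Q.roots.toFinset with hbaddef
  have hbad : bad.card ≤ 2 * n + 1 := by
    refine (Finset.card_insert_le _ _).trans ?_
    have h1 : Q.roots.toFinset.card ≤ Multiset.card Q.roots := Multiset.toFinset_card_le _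
    have h2 := Polynomial.card_roots' Q
    omega
  obtain ⟨α, hα⟩ : ∃ α : F, α ∉ bad := by
    by_contra hcon
    push_neg at hcon
    have h1 : (Finset.univ : Finset F) ⊆ bad := fun x _ => hcon x
    have h2 := Finset.card_le_card h1
    rw [Finset.card_univ, ← Nat.card_eq_fintype_card, hcardF] at h2
    omega
  have hα0 : α ≠ 0 := fun h => hα (by rw [h]; exact Finset.mem_insert_self _ _)
  set u : Fˣ := Units.mk0 α hα0 with hu
  have hαroot : Q.eval α ≠ 0 := by
    intro h
    exact hα (Finset.mem_insert_of_mem (Multiset.mem_toFinset.2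
      ((Polynomial.mem_roots hQ0).2 h)))
  have hEval : Q.eval α = lampP p F u f * ((u ^ (n : ℤ) : Fˣ) : F) := by
    rw [hQ, Polynomial.eval_finset_sum, lampP_apply, Finsupp.sum, Finset.sum_mul]
    apply Finset.sum_congr rfl
    intro i hi
    rw [Polynomial.eval_mul, Polynomial.eval_C, Polynomial.eval_pow, Polynomial.eval_X]
    rw [mul_assoc]
    congr 1
    rw [← Units.val_mul, ← zpow_add u i (n : ℤ)]
    have h3 : u ^ ((i : ℤ) + n) = u ^ ((i + (n : ℤ)).toNat) := by
      rw [← zpow_natCast]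
      congr 1
      rw [htoNat i hi]
    rw [h3, Units.val_pow_eq_pow_val]
    rfl
  have hPf : lampP p F u f ≠ 0 := by
    intro h
    rw [h, zero_mul] at hEval
    exact hαroot hEval
  set ψ := lampHom p F u with hψ
  have hkerne : g ∉ ψ.ker := by
    intro hg
    have h1 : ψ g 0 = 0 := by rw [MonoidHom.mem_ker.1 hg]; rfl
    rw [lampHom_apply, mul_zero, add_zero] at h1
    exact hPf h1
  have haff : ∀ e : Equiv.Perm F, e ∈ ψ.range → ∀ x, e x = e 0 + (e 1 - e 0) * x := by
    rintro e ⟨g', rfl⟩ x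
    rw [lampHom_apply, lampHom_apply, lampHom_apply]
    ring
  have hinj : Function.Injective
      (fun e : ψ.range => (((e : Equiv.Perm F)) 0, ((e : Equiv.Perm F)) 1)) := by
    rintro ⟨e, he⟩ ⟨e', he'⟩ hmk
    simp only [Prod.mk.injEq] at hmk
    apply Subtype.ext
    apply Equiv.ext
    intro x
    rw [haff e he x, haff e' he' x, hmk.1, hmk.2]
  have hcard : Nat.card ψ.range ≤ p ^ k * p ^ k := by
    calc Nat.card ψ.range ≤ Nat.card (F × F) := Nat.card_le_card_of_injective _ hinj
    _ = p ^ k * p ^ k := by rw [Nat.card_prod, hcardF]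
  have hidx : ψ.ker.index = Nat.card ψ.range := Subgroup.index_ker ψ
  have hpos : 0 < Nat.card ψ.range := Nat.card_pos
  refine ⟨ψ.ker, inferInstance, hkerne, ?_, ?_⟩
  · rw [hidx]; omega
  · rw [hidx]
    refine hcard.trans ?_
    nlinarith [hkub]

end Main

section Main2

open SemidirectProduct Multiplicative

lemma lamp_detect_shift (p n : ℕ) (g : Lamp p)
    (ht : Multiplicative.toAdd g.right ≠ 0)
    (htle : |Multiplicative.toAdd g.right| ≤ (n : ℤ)) :
    ∃ N : Subgroup (Lamp p), N.Normal ∧ g ∉ N ∧ N.index ≠ 0 ∧ N.index ≤ n + 1 := by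
  set η : Lamp p →* Multiplicative (ZMod (n + 1)) :=
    (AddMonoidHom.toMultiplicative (Int.castAddHom (ZMod (n + 1)))).comp
      (SemidirectProduct.rightHom) with hη
  have hηg : Multiplicative.toAdd (η g) = ((Multiplicative.toAdd g.right : ℤ) : ZMod (n + 1)) :=
    rfl
  have hkerne : g ∉ η.ker := by
    intro hg
    have h1 : Multiplicative.toAdd (η g) = 0 := by
      rw [MonoidHom.mem_ker.1 hg]; rfl
    rw [hηg, ZMod.intCast_zmod_eq_zero_iff_dvd] at h1
    have h2 : ((n : ℤ) + 1) ≤ |Multiplicative.toAdd g.right| := by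
      apply Int.le_of_dvd (abs_pos.2 ht)
      push_cast at h1 ⊢
      exact (dvd_abs _ _).2 h1
    linarith
  have hidx : η.ker.index = Nat.card η.range := Subgroup.index_ker η
  have hpos : 0 < Nat.card η.range := Nat.card_pos
  have hcard : Nat.card η.range ≤ n + 1 := by
    calc Nat.card η.range ≤ Nat.card (Multiplicative (ZMod (n + 1))) :=
      Subgroup.card_le_card_group _
    _ = n + 1 := by
        rw [Nat.card_congr (MulEquiv.toEquiv (MulEquiv.refl _))]
        rw [show Nat.card (Multiplicative (ZMod (n+1))) = Nat.card (ZMod (n+1)) from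
          Nat.card_congr Multiplicative.toAdd, Nat.card_zmod]
  exact ⟨η.ker, inferInstance, hkerne, by omega, by omega⟩

end Main2

/-- Bou-Rabee et al.. The residual finiteness growth of the
lamplighter group `L_p` with respect to `{a, b}` satisfies
`rf_{L_p,{a,b}}(n) ≤ 4 p² (n+1)²`. -/
theorem lamplighter_rfGrowth_le (p : ℕ) (hp : p.Prime) (n : ℕ) :
    rfGrowth ({lampA p, lampB p} : Set (Lamp p)) n ≤ 4 * p ^ 2 * (n + 1) ^ 2 := by
  apply csSup_le'
  rintro d ⟨g, hg1, hgw, rfl⟩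
  set X : Set (Lamp p) := {lampA p, lampB p} with hX
  -- extract a geodesic word for `g`
  have hmem : g ∈ Subgroup.closure X := by rw [lamp_closure_eq_top p hp]; trivial
  have hmem' : g ∈ Submonoid.closure (X ∪ X⁻¹) := by
    rw [← Subgroup.closure_toSubmonoid]; exact hmem
  obtain ⟨l, hl, hlp⟩ := Submonoid.exists_list_of_mem_closure hmem'
  have hcond : ∀ x ∈ l, x ∈ X ∨ x⁻¹ ∈ X := by
    intro x hx
    rcases hl x hx with h | h
    · exact Or.inl h
    · exact Or.inr (Set.mem_inv.1 h)
  have hSne : { m : ℕ | ∃ l : List (Lamp p),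
      (∀ x ∈ l, x ∈ X ∨ x⁻¹ ∈ X) ∧ l.length = m ∧ l.prod = g }.Nonempty :=
    ⟨l.length, l, hcond, rfl, hlp⟩
  obtain ⟨l₀, hl₀cond, hl₀len, hl₀prod⟩ := Nat.sInf_mem hSne
  have hlen : l₀.length ≤ n := by
    have : sInf { m : ℕ | ∃ l : List (Lamp p),
        (∀ x ∈ l, x ∈ X ∨ x⁻¹ ∈ X) ∧ l.length = m ∧ l.prod = g } = wordLength X g := rfl
    omega
  obtain ⟨hr, hleft⟩ := lamp_word_bound l₀ hl₀cond
  rw [hl₀prod] at hr hleft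
  have hlen' : (l₀.length : ℤ) ≤ (n : ℤ) := by exact_mod_cast hlen
  have hrn : |Multiplicative.toAdd g.right| ≤ (n : ℤ) := hr.trans hlen'
  have hleftn : ∀ i : ℤ, (n : ℤ) < |i| → Multiplicative.toAdd g.left i = 0 :=
    fun i hi => hleft i (lt_of_le_of_lt hlen' hi)
  have hbound : ∃ N : Subgroup (Lamp p), N.Normal ∧ g ∉ N ∧ N.index ≠ 0 ∧
      N.index ≤ 4 * p ^ 2 * (n + 1) ^ 2 := by
    by_cases hf0 : Multiplicative.toAdd g.left = 0
    · have ht : Multiplicative.toAdd g.right ≠ 0 := by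
        intro h
        apply hg1
        have h1 : g.left = 1 := by
          rw [← ofAdd_toAdd g.left, hf0, ofAdd_zero]
        have h2 : g.right = 1 := by
          rw [← ofAdd_toAdd g.right, h, ofAdd_zero]
        have : g = SemidirectProduct.inl g.left * SemidirectProduct.inr g.right :=
          (SemidirectProduct.inl_left_mul_inr_right g).symm
        rw [this, h1, h2, map_one, map_one, one_mul]
      obtain ⟨N, h1, h2, h3, h4⟩ := lamp_detect_shift p n g ht hrn
      refine ⟨N, h1, h2, h3, h4.trans ?_⟩
      calc n + 1 ≤ (n + 1) ^ 2 := Nat.le_self_pow two_ne_zero _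
      _ ≤ 4 * p ^ 2 * (n + 1) ^ 2 :=
        Nat.le_mul_of_pos_left _ (by have := hp.pos; positivity)
    · exact lamp_detect_base p hp n g hleftn hf0
  obtain ⟨N, hN1, hN2, hN3, hN4⟩ := hbound
  have hmemS : N.index ∈ { d : ℕ | d ≠ 0 ∧
      ∃ N' : Subgroup (Lamp p), N'.Normal ∧ g ∉ N' ∧ N'.index = d } :=
    ⟨hN3, N, hN1, hN2, rfl⟩
  exact (Nat.sInf_le hmemS).trans hN4
end

section
/- If G ≤ H are finitely generated residually finite groups with finite generating sets X and Y respectively, then rf_{G,X}(n) ≼ rf_{H,Y}(n), i.e., there exists a constant C such that rf_{G,X}(n) ≤ C · rf_{H,Y}(Cn) for all n. -/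
section Aux

variable {G H : Type*} [Group G] [Group H]

lemma exists_word {X : Set G} (hX : Subgroup.closure X = ⊤) (g : G) :
    ∃ l : List G, (∀ x ∈ l, x ∈ X ∨ x⁻¹ ∈ X) ∧ l.prod = g := by
  have hg : g ∈ Submonoid.closure (X ∪ X⁻¹) := by
    rw [← Subgroup.closure_toSubmonoid, hX]; trivial
  obtain ⟨l, hl, hp⟩ := Submonoid.exists_list_of_mem_closure hg
  exact ⟨l, fun x hx => by
    rcases hl x hx with h | h
    · exact Or.inl h
    · exact Or.inr (Set.mem_inv.mp h), hp⟩

lemma wordLength_le {X : Set G} {g : G} {l : List G}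
    (hl : ∀ x ∈ l, x ∈ X ∨ x⁻¹ ∈ X) (hp : l.prod = g) :
    wordLength X g ≤ l.length :=
  Nat.sInf_le ⟨l, hl, rfl, hp⟩

lemma exists_min_word {X : Set G} (hX : Subgroup.closure X = ⊤) (g : G) :
    ∃ l : List G, (∀ x ∈ l, x ∈ X ∨ x⁻¹ ∈ X) ∧ l.length = wordLength X g ∧ l.prod = g := by
  obtain ⟨l, hl, hp⟩ := exists_word hX g
  have : wordLength X g ∈ { n : ℕ | ∃ l : List G,
      (∀ x ∈ l, x ∈ X ∨ x⁻¹ ∈ X) ∧ l.length = n ∧ l.prod = g } :=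
    Nat.sInf_mem ⟨l.length, l, hl, rfl, hp⟩
  exact this

lemma wordLength_mul_le {Y : Set H} (hY : Subgroup.closure Y = ⊤) (a b : H) :
    wordLength Y (a * b) ≤ wordLength Y a + wordLength Y b := by
  obtain ⟨l₁, h₁, hlen₁, hp₁⟩ := exists_min_word hY a
  obtain ⟨l₂, h₂, hlen₂, hp₂⟩ := exists_min_word hY b
  calc wordLength Y (a * b) ≤ (l₁ ++ l₂).length := by
        refine wordLength_le ?_ (by simp [hp₁, hp₂])
        intro x hx
        rcases List.mem_append.mp hx with h | h
        exacts [h₁ x h, h₂ x h]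
    _ = wordLength Y a + wordLength Y b := by simp [hlen₁, hlen₂]

lemma wordLength_inv_le {Y : Set H} (hY : Subgroup.closure Y = ⊤) (a : H) :
    wordLength Y a⁻¹ ≤ wordLength Y a := by
  obtain ⟨l, hl, hlen, hp⟩ := exists_min_word hY a
  have := wordLength_le (X := Y) (g := a⁻¹) (l := (l.map fun x => x⁻¹).reverse)
    (by
      intro x hx
      simp only [List.mem_reverse, List.mem_map] at hx
      obtain ⟨y, hy, rfl⟩ := hx
      rcases hl y hy with h | h
      · exact Or.inr (by simpa using h)
      · exact Or.inl h)
    (by rw [← List.prod_inv_reverse, hp])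
  simpa [hlen] using this

lemma wordLength_prod_le {Y : Set H} (hY : Subgroup.closure Y = ⊤) (l : List H) :
    wordLength Y l.prod ≤ (l.map (wordLength Y)).sum := by
  induction l with
  | nil =>
    simpa using wordLength_le (X := Y) (g := (1 : H)) (l := []) (by simp) (by simp)
  | cons a l ih =>
    calc wordLength Y (a :: l).prod ≤ wordLength Y a + wordLength Y l.prod := by
          simpa using wordLength_mul_le hY a l.prod
      _ ≤ wordLength Y a + (l.map (wordLength Y)).sum := Nat.add_le_add_left ih _
      _ = ((a :: l).map (wordLength Y)).sum := by simp

lemma rfDepth_mem {g : G} (hg : g ≠ 1) (hG : ResiduallyFinite G) :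
    rfDepth g ≠ 0 ∧ ∃ N : Subgroup G, N.Normal ∧ g ∉ N ∧ N.index = rfDepth g := by
  obtain ⟨N, hN, hNi, hgN⟩ := hG g hg
  have hne : { d : ℕ | d ≠ 0 ∧ ∃ N : Subgroup G, N.Normal ∧ g ∉ N ∧ N.index = d }.Nonempty :=
    ⟨N.index, hNi, N, hN, hgN, rfl⟩
  exact Nat.sInf_mem hne

lemma rfDepth_le_rfDepth_map (ι : G →* H) (hι : Function.Injective ι)
    {g : G} (hg : g ≠ 1) (hH : ResiduallyFinite H) :
    rfDepth g ≤ rfDepth (ι g) := by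
  have hιg : ι g ≠ 1 := fun h => hg (hι (by simpa using h))
  obtain ⟨hd0, N, hN, hgN, hNi⟩ := rfDepth_mem hιg hH
  have hNind : N.index ≠ 0 := by rw [hNi]; exact hd0
  -- pull back
  have hnorm : (N.comap ι).Normal := Subgroup.Normal.comap hN ι
  have hrel : (N.comap ι).index ∣ N.index := by
    rw [Subgroup.index_comap]
    exact Subgroup.relIndex_dvd_index_of_normal N ι.range
  have hne : (N.comap ι).index ≠ 0 := fun h => by
    rw [h] at hrel; exact hNind (Nat.eq_zero_of_zero_dvd hrel)
  have hmem : (N.comap ι).index ∈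
      { d : ℕ | d ≠ 0 ∧ ∃ M : Subgroup G, M.Normal ∧ g ∉ M ∧ M.index = d } :=
    ⟨hne, N.comap ι, hnorm, fun h => hgN h, rfl⟩
  calc rfDepth g ≤ (N.comap ι).index := Nat.sInf_le hmem
    _ ≤ N.index := Nat.le_of_dvd (Nat.pos_of_ne_zero hNind) hrel
    _ = rfDepth (ι g) := hNi

lemma ball_finite {Y : Set H} (hYfin : Y.Finite) (hYgen : Subgroup.closure Y = ⊤) (m : ℕ) :
    {h : H | wordLength Y h ≤ m}.Finite := by
  set s : Set H := Y ∪ Y⁻¹ with hs_def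
  have hs : s.Finite := hYfin.union hYfin.inv
  haveI := hs.to_subtype
  apply Set.Finite.subset
    (Set.Finite.image (fun l : List ↥s => (l.map ((↑) : ↥s → H)).prod)
      (List.finite_length_le ↥s m))
  intro h hh
  obtain ⟨l, hl, hlen, hp⟩ := exists_min_word hYgen h
  have hmem : ∀ x ∈ l, x ∈ s := by
    intro x hx
    rcases hl x hx with h' | h'
    · exact Or.inl h'
    · exact Or.inr (Set.mem_inv.mpr h')
  refine ⟨l.attach.map fun x => (⟨x.1, hmem x.1 x.2⟩ : ↥s), ?_, ?_⟩
  · simpa using le_trans (le_of_eq hlen) hh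
  · simp only [List.map_map]
    have : ((↑) : ↥s → H) ∘ (fun x : {x // x ∈ l} => (⟨x.1, hmem x.1 x.2⟩ : ↥s))
        = fun x : {x // x ∈ l} => x.1 := rfl
    rw [this]
    simpa [List.attach_map_subtype_val] using hp

lemma bddAbove_rfSet {Y : Set H} (hYfin : Y.Finite) (hYgen : Subgroup.closure Y = ⊤) (m : ℕ) :
    BddAbove { d : ℕ | ∃ h : H, h ≠ 1 ∧ wordLength Y h ≤ m ∧ rfDepth h = d } := by
  apply Set.Finite.bddAbove
  apply Set.Finite.subset ((ball_finite hYfin hYgen m).image rfDepth)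
  rintro d ⟨h, _, hlen, rfl⟩
  exact ⟨h, hlen, rfl⟩

end Aux
/-- If `G ≤ H` are finitely generated residually finite groups
with finite generating sets `X` and `Y` respectively, then
`rf_{G,X} ≼ rf_{H,Y}`: there is a constant `C > 0` with
`rf_{G,X}(n) ≤ C · rf_{H,Y}(C n)` for all `n`. -/
theorem rfGrowth_dominated_of_subgroup {G H : Type*} [Group G] [Group H]
    (ι : G →* H) (hι : Function.Injective ι)
    (X : Set G) (Y : Set H) (hXfin : X.Finite) (hYfin : Y.Finite)
    (hXgen : Subgroup.closure X = ⊤) (hYgen : Subgroup.closure Y = ⊤)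
    (hG : ResiduallyFinite G) (hH : ResiduallyFinite H) :
    ∃ C : ℕ, 0 < C ∧ ∀ n : ℕ, rfGrowth X n ≤ C * rfGrowth Y (C * n) := by
  set C : ℕ := (hXfin.toFinset.sup fun x => wordLength Y (ι x)) + 1 with hC_def
  have hCpos : 0 < C := Nat.succ_pos _
  have key : ∀ g : G, wordLength Y (ι g) ≤ C * wordLength X g := by
    intro g
    obtain ⟨l, hl, hlen, hp⟩ := exists_min_word hXgen g
    have hsup : ∀ x ∈ X, wordLength Y (ι x) ≤ C := fun x hx =>
      le_trans (Finset.le_sup (f := fun x => wordLength Y (ι x)) (hXfin.mem_toFinset.mpr hx))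
        (Nat.le_succ _)
    have hbound : ∀ x ∈ l, wordLength Y (ι x) ≤ C := by
      intro x hx
      rcases hl x hx with h | h
      · exact hsup x h
      · have h1 : wordLength Y (ι x) ≤ wordLength Y (ι x⁻¹) := by
          have : ι x = (ι x⁻¹)⁻¹ := by simp
          rw [this]
          exact wordLength_inv_le hYgen _
        exact le_trans h1 (hsup x⁻¹ h)
    calc wordLength Y (ι g) = wordLength Y (l.map ι).prod := by rw [List.prod_hom l ι, hp]
      _ ≤ ((l.map ι).map (wordLength Y)).sum := wordLength_prod_le hYgen _
      _ ≤ ((l.map ι).map (wordLength Y)).length • C := by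
          apply List.sum_le_card_nsmul
          intro x hx
          simp only [List.map_map, List.mem_map] at hx
          obtain ⟨y, hy, rfl⟩ := hx
          exact hbound y hy
      _ = C * wordLength X g := by simp [hlen, Nat.mul_comm]
  refine ⟨C, hCpos, fun n => ?_⟩
  have h1 : rfGrowth X n ≤ rfGrowth Y (C * n) := by
    apply csSup_le'
    rintro d ⟨g, hg1, hlen, rfl⟩
    have hιg : ι g ≠ 1 := fun h => hg1 (hι (by simpa using h))
    have hw : wordLength Y (ι g) ≤ C * n :=
      le_trans (key g) (Nat.mul_le_mul_left C hlen)
    calc rfDepth g ≤ rfDepth (ι g) := rfDepth_le_rfDepth_map ι hι hg1 hH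
      _ ≤ rfGrowth Y (C * n) :=
        le_csSup (bddAbove_rfSet hYfin hYgen (C * n)) ⟨ι g, hιg, hw, rfl⟩
  calc rfGrowth X n ≤ rfGrowth Y (C * n) := h1
    _ ≤ C * rfGrowth Y (C * n) := Nat.le_mul_of_pos_left _ hCpos
end

section
/- Let G = ⟨X⟩ be a finitely generated residually finite group with recursively enumerable presentation, and suppose the word problem of G is decidable. Then the individual residual finiteness depth function ρ : (X ∪ X^{-1})* → ℕ is left-computable, i.e., the set { (w, k) : ρ(w) > k } is recursively enumerable. -/
/-- Evaluation of a word over the generators `X` (with `true` = generator,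
`false` = inverse) in the group `G`. -/
def evalWord {G : Type*} [Group G] {m : ℕ} (X : Fin m → G)
    (w : List (Fin m × Bool)) : G :=
  (w.map fun p => if p.2 then X p.1 else (X p.1)⁻¹).prod

/-- The individual residual finiteness depth function `ρ` of `G = ⟨X⟩`:
`ρ(w) = 1` if `w` represents the identity, and otherwise `ρ(w)` is the least
order of a finite quotient of `G` in which the element represented by `w`
survives (equivalently, the least index of a finite-index normal subgroup
avoiding it). -/
noncomputable def rhoDepth {G : Type*} [Group G] {m : ℕ} (X : Fin m → G)
    (w : List (Fin m × Bool)) : ℕ := by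
  classical exact if evalWord X w = 1 then 1 else rfDepth (evalWord X w)
/-- `f : S → ℕ` is left-computable if `{ (s,k) | f s > k }` is recursively
enumerable (`REPred` is Mathlib's notion of a recursively enumerable predicate). -/
def LeftComputable {α : Type*} [Primcodable α] (f : α → ℕ) : Prop :=
  REPred (fun x : α × ℕ => x.2 < f x.1)




namespace RhoAux

/-- table lookup multiplication -/
def mulT (d : ℕ) (t : List ℕ) (a b : ℕ) : ℕ := t.getD (a * d + b) 0

/-- `a ^ (d-1)`, which is the inverse in a group of order `d` -/
def invT (d : ℕ) (t : List ℕ) (a : ℕ) : ℕ :=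
  (List.range (d - 1)).foldl (fun acc _ => mulT d t acc a) 0

/-- evaluate a word in the table group -/
def evalT {m : ℕ} (d : ℕ) (t : List ℕ) (fl : List ℕ) (w : List (Fin m × Bool)) : ℕ :=
  w.foldl (fun acc p =>
    mulT d t acc (if p.2 then fl.getD p.1 0 else invT d t (fl.getD p.1 0))) 0

/-- `t` is a group multiplication table of size `d` with identity `0`. -/
def GTP (d : ℕ) (t : List ℕ) : Prop :=
  t.length = d * d ∧ (∀ x ∈ t, x < d) ∧
  ∀ a, a < d → (mulT d t 0 a = a ∧ mulT d t a 0 = a) ∧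
    (∀ b, b < d → ∀ c, c < d →
      mulT d t (mulT d t a b) c = mulT d t a (mulT d t b c)) ∧
    ∃ b, b < d ∧ mulT d t a b = 0 ∧ mulT d t b a = 0

/-- all lists of length `n` with entries `< b` -/
def allLists (b : ℕ) : ℕ → List (List ℕ) :=
  Nat.rec [[]] fun _ ih => (List.range b).flatMap fun x => ih.map (x :: ·)

lemma mem_allLists {b : ℕ} : ∀ {n : ℕ} {l : List ℕ},
    l ∈ allLists b n ↔ l.length = n ∧ ∀ x ∈ l, x < b := by
  intro n
  induction n with
  | zero =>
    intro l
    show l ∈ [[]] ↔ _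
    simp only [List.mem_singleton]
    constructor
    · rintro rfl; simp
    · rintro ⟨h, -⟩; exact List.length_eq_zero_iff.mp h
  | succ n ih =>
    intro l
    show l ∈ (List.range b).flatMap _ ↔ _
    simp only [List.mem_flatMap, List.mem_map, List.mem_range]
    constructor
    · rintro ⟨x, hx, l', hl', rfl⟩
      rcases ih.mp hl' with ⟨h1, h2⟩
      refine ⟨by simp [h1], ?_⟩
      intro y hy
      rcases List.mem_cons.mp hy with rfl | hy
      · exact hx
      · exact h2 _ hy
    · rintro ⟨h1, h2⟩
      rcases l with _ | ⟨x, l'⟩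
      · simp at h1
      · exact ⟨x, h2 _ (List.mem_cons_self), l',
          ih.mpr ⟨by simpa using h1, fun y hy => h2 _ (List.mem_cons_of_mem _ hy)⟩, rfl⟩

lemma mulT_lt {d : ℕ} {t : List ℕ} (h : GTP d t) {a b : ℕ} (ha : a < d) (hb : b < d) :
    mulT d t a b < d := by
  have hlen : a * d + b < t.length := by
    rw [h.1]
    calc a * d + b < a * d + d := by omega
    _ = (a + 1) * d := by ring
    _ ≤ d * d := Nat.mul_le_mul_right d ha
  have : t.getD (a * d + b) 0 = t[a * d + b] := List.getD_eq_getElem t 0 hlen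
  rw [mulT, this]
  exact h.2.1 _ (List.getElem_mem _)

end RhoAux

namespace RhoAux2
open RhoAux

section
variable {G : Type*} [Group G] {m : ℕ}

lemma evalWord_append (X : Fin m → G) (u v : List (Fin m × Bool)) :
    evalWord X (u ++ v) = evalWord X u * evalWord X v := by
  simp [evalWord]

lemma evalWord_hom {H : Type*} [Group H] (φ : G →* H) (X : Fin m → G)
    (w : List (Fin m × Bool)) :
    φ (evalWord X w) = evalWord (fun i => φ (X i)) w := by
  induction w with
  | nil => simp [evalWord]
  | cons p w ih =>
    have : p :: w = [p] ++ w := rfl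
    rw [this, evalWord_append, evalWord_append, map_mul, ih]
    congr 1
    rcases p with ⟨i, b⟩
    cases b <;> simp [evalWord]

lemma evalWord_eq_lift_mk (X : Fin m → G) (w : List (Fin m × Bool)) :
    FreeGroup.lift X (FreeGroup.mk w) = evalWord X w := by
  rw [FreeGroup.lift_mk, evalWord]
  congr 1
  apply List.map_congr_left
  intro p _
  cases hb : p.2 <;> simp

end

section Bridge

variable {H : Type*} [Group H] {m d : ℕ} {t fl : List ℕ}

lemma foldl_pow (ε : H → ℕ)
    (hmul : ∀ x y : H, mulT d t (ε x) (ε y) = ε (x * y)) (x y : H) :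
    ∀ n : ℕ, (List.range n).foldl (fun acc _ => mulT d t acc (ε x)) (ε y) = ε (y * x ^ n) := by
  intro n
  induction n with
  | zero => simp
  | succ n ih =>
    rw [List.range_succ, List.foldl_append, ih]
    simp only [List.foldl_cons, List.foldl_nil, hmul]
    rw [mul_assoc, ← pow_succ]

lemma invT_bridge (hd : d ≠ 0) (hcard : Nat.card H = d) (ε : H → ℕ) (hone : ε 1 = 0)
    (hmul : ∀ x y : H, mulT d t (ε x) (ε y) = ε (x * y)) (x : H) :
    invT d t (ε x) = ε x⁻¹ := by
  have h1 : x ^ (d - 1) = x⁻¹ := by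
    apply eq_inv_of_mul_eq_one_left
    rw [← pow_succ]
    have : d - 1 + 1 = d := by omega
    rw [this, ← hcard, pow_card_eq_one']
  rw [invT, ← hone, foldl_pow ε hmul x 1, one_mul, h1]

lemma evalT_bridge (hd : d ≠ 0) (hcard : Nat.card H = d)
    (ε : H → ℕ) (hone : ε 1 = 0)
    (hmul : ∀ x y : H, mulT d t (ε x) (ε y) = ε (x * y))
    (f : Fin m → H) (hfl : ∀ i : Fin m, fl.getD i 0 = ε (f i)) :
    ∀ w : List (Fin m × Bool), evalT d t fl w = ε (evalWord f w) := by
  intro w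
  induction w using List.reverseRecOn with
  | nil => simp [evalT, evalWord, hone]
  | append_singleton w p ih =>
    rw [evalT, List.foldl_append] at *
    simp only [List.foldl_cons, List.foldl_nil]
    rw [ih, evalWord_append]
    rcases p with ⟨i, b⟩
    cases b
    · rw [if_neg (by simp), hfl i, invT_bridge hd hcard ε hone hmul, hmul]
      simp [evalWord]
    · rw [if_pos rfl, hfl i, hmul]
      simp [evalWord]

end Bridge
end RhoAux2
namespace RhoAux3
open RhoAux RhoAux2

variable {G : Type*} [Group G] {m : ℕ}

/-- From a normal subgroup of index `d` avoiding detection, build a table. -/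
lemma table_of_quotient (X : Fin m → G) (N : Subgroup G) (hN : N.Normal)
    {d : ℕ} (hdN : N.index = d) (hd0 : d ≠ 0) :
    ∃ t fl : List ℕ, GTP d t ∧ fl.length = m ∧ (∀ x ∈ fl, x < d) ∧
      ∀ w : List (Fin m × Bool), (evalT d t fl w = 0 ↔ evalWord X w ∈ N) := by
  classical
  haveI := hN
  haveI : Fintype (G ⧸ N) := Subgroup.fintypeOfIndexNeZero (by rw [hdN]; exact hd0)
  have hdpos : 0 < d := Nat.pos_of_ne_zero hd0
  have hcard : Nat.card (G ⧸ N) = d := by rw [← Subgroup.index_eq_card, hdN]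
  have hc2 : Fintype.card (G ⧸ N) = d := by rw [← Nat.card_eq_fintype_card, hcard]
  let e0 : G ⧸ N ≃ Fin d := Fintype.equivFinOfCardEq hc2
  let e : G ⧸ N ≃ Fin d := e0.trans (Equiv.swap (e0 1) ⟨0, hdpos⟩)
  have he1 : e 1 = ⟨0, hdpos⟩ := by simp [e, Equiv.swap_apply_left]
  set ε : G ⧸ N → ℕ := fun x => (e x : ℕ) with hε
  have hone : ε 1 = 0 := by rw [hε]; simp only [he1]
  have hεinj : Function.Injective ε := fun a b h => e.injective (Fin.val_injective h)
  have hεlt : ∀ x, ε x < d := fun x => (e x).2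
  have hsurj : ∀ a, a < d → ∃ x, ε x = a := fun a ha => ⟨e.symm ⟨a, ha⟩, by simp [hε]⟩
  set t : List ℕ := (List.range (d * d)).map (fun n =>
    if h : n < d * d then
      ε (e.symm ⟨n / d, (Nat.div_lt_iff_lt_mul hdpos).2 h⟩ *
        e.symm ⟨n % d, Nat.mod_lt _ hdpos⟩)
    else 0) with ht
  have hlen : t.length = d * d := by simp [ht]
  have hmulT : ∀ x y : G ⧸ N, mulT d t (ε x) (ε y) = ε (x * y) := by
    intro x y
    have hidx : ε x * d + ε y < d * d := by
      calc ε x * d + ε y < ε x * d + d := Nat.add_lt_add_left (hεlt y) _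
      _ = (ε x + 1) * d := by ring
      _ ≤ d * d := Nat.mul_le_mul_right d (hεlt x)
    rw [mulT, List.getD_eq_getElem t 0 (by rw [hlen]; exact hidx)]
    have hdiv : (ε x * d + ε y) / d = ε x := by
      rw [mul_comm, Nat.mul_add_div hdpos, Nat.div_eq_of_lt (hεlt y), Nat.add_zero]
    have hmod : (ε x * d + ε y) % d = ε y := by
      rw [mul_comm, Nat.mul_add_mod, Nat.mod_eq_of_lt (hεlt y)]
    simp only [ht, List.getElem_map, List.getElem_range, dif_pos hidx]
    congr 2
    · apply e.injective
      rw [Equiv.apply_symm_apply]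
      apply Fin.ext
      simp [hdiv, hε]
      exact hdiv
    · apply e.injective
      rw [Equiv.apply_symm_apply]
      apply Fin.ext
      simp [hmod, hε]
      exact Nat.mod_eq_of_lt (hεlt y)
  have hGTP : GTP d t := by
    refine ⟨hlen, ?_, ?_⟩
    · intro z hz
      rw [ht] at hz
      rcases List.mem_map.mp hz with ⟨n, _, rfl⟩
      split
      · exact hεlt _
      · exact hdpos
    · intro a ha
      obtain ⟨x, rfl⟩ := hsurj a ha
      refine ⟨⟨?_, ?_⟩, ?_, ?_⟩
      · rw [← hone, hmulT, one_mul]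
      · rw [← hone, hmulT, mul_one]
      · intro b hb c hc
        obtain ⟨y, rfl⟩ := hsurj b hb
        obtain ⟨z, rfl⟩ := hsurj c hc
        rw [hmulT, hmulT, hmulT, hmulT, mul_assoc]
      · exact ⟨ε x⁻¹, hεlt _, by rw [hmulT, mul_inv_cancel, hone],
          by rw [hmulT, inv_mul_cancel, hone]⟩
  set fl : List ℕ := List.ofFn (fun i : Fin m => ε ((X i : G) : G ⧸ N)) with hfl
  have hfll : fl.length = m := by simp [hfl]
  have hfle : ∀ x ∈ fl, x < d := by
    intro x hx
    rw [hfl] at hx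
    rcases List.mem_ofFn.mp hx with ⟨i, rfl⟩
    exact hεlt _
  have hflget : ∀ i : Fin m, fl.getD i 0 = ε ((X i : G) : G ⧸ N) := by
    intro i
    rw [List.getD_eq_getElem fl 0 (by rw [hfll]; exact i.2)]
    simp [hfl]
  refine ⟨t, fl, hGTP, hfll, hfle, ?_⟩
  intro w
  have hb := evalT_bridge (t := t) hd0 hcard ε hone hmulT
    (fun i => ((X i : G) : G ⧸ N)) hflget w
  have hw : evalWord (fun i => ((X i : G) : G ⧸ N)) w
      = ((evalWord X w : G) : G ⧸ N) := by
    rw [show ((evalWord X w : G) : G ⧸ N) = QuotientGroup.mk' N (evalWord X w) from rfl,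
      evalWord_hom (QuotientGroup.mk' N) X w]
    rfl
  rw [hb, hw]
  constructor
  · intro h
    have : ((evalWord X w : G) : G ⧸ N) = 1 := hεinj (by rw [h, hone])
    exact (QuotientGroup.eq_one_iff _).mp this
  · intro h
    rw [(QuotientGroup.eq_one_iff _).mpr h, hone]

/-- From a table-homomorphism detecting `w`, build a normal subgroup. -/
lemma subgroup_of_table (X : Fin m → G)
    (hgen : Subgroup.closure (Set.range X) = ⊤) {d : ℕ} (hdpos : 0 < d)
    {t fl : List ℕ} (hGT : GTP d t) (hfll : fl.length = m) (hfle : ∀ x ∈ fl, x < d)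
    (hker : ∀ u : List (Fin m × Bool), evalWord X u = 1 → evalT d t fl u = 0) :
    ∃ N : Subgroup G, N.Normal ∧ N.index ≠ 0 ∧ N.index ≤ d ∧
      ∀ w : List (Fin m × Bool), evalT d t fl w ≠ 0 → evalWord X w ∉ N := by
  classical
  letI : Mul {x : ℕ // x < d} := ⟨fun a b => ⟨mulT d t a.1 b.1, mulT_lt hGT a.2 b.2⟩⟩
  letI : One {x : ℕ // x < d} := ⟨⟨0, hdpos⟩⟩
  letI : Inv {x : ℕ // x < d} := ⟨fun a => ⟨Classical.choose (hGT.2.2 a.1 a.2).2.2,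
      (Classical.choose_spec (hGT.2.2 a.1 a.2).2.2).1⟩⟩
  letI : Group {x : ℕ // x < d} := Group.ofLeftAxioms
    (fun a b c => Subtype.ext ((hGT.2.2 a.1 a.2).2.1 b.1 b.2 c.1 c.2))
    (fun a => Subtype.ext ((hGT.2.2 a.1 a.2).1.1))
    (fun a => Subtype.ext (Classical.choose_spec (hGT.2.2 a.1 a.2).2.2).2.2)
  have hone : ((1 : {x : ℕ // x < d}) : ℕ) = 0 := rfl
  have hmul : ∀ x y : {x : ℕ // x < d}, mulT d t x.1 y.1 = ((x * y : _) : ℕ) :=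
    fun _ _ => rfl
  have eH : {x : ℕ // x < d} ≃ Fin d := ⟨fun x => ⟨x.1, x.2⟩, fun i => ⟨i.1, i.2⟩,
    fun _ => rfl, fun _ => rfl⟩
  haveI : Finite {x : ℕ // x < d} := Finite.of_equiv _ eH.symm
  have hcard : Nat.card {x : ℕ // x < d} = d := by
    rw [Nat.card_congr eH, Nat.card_eq_fintype_card, Fintype.card_fin]
  have hmem : ∀ i : Fin m, fl.getD i 0 < d := fun i =>
    hfle _ (by rw [List.getD_eq_getElem fl 0 (by rw [hfll]; exact i.2)]
               exact List.getElem_mem _)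
  set f : Fin m → {x : ℕ // x < d} := fun i => ⟨fl.getD i 0, hmem i⟩ with hf
  have hflget : ∀ i : Fin m, fl.getD i 0 = (f i).1 := fun i => rfl
  have hbridge : ∀ w, evalT d t fl w = ((evalWord f w : {x : ℕ // x < d}) : ℕ) :=
    evalT_bridge (by omega) hcard (fun h => h.1) hone (fun x y => (hmul x y).symm)
      f hflget
  set π : FreeGroup (Fin m) →* G := FreeGroup.lift X with hπdef
  have hπ : Function.Surjective π := by
    rw [← MonoidHom.range_eq_top, hπdef, FreeGroup.range_lift_eq_closure, hgen]
  set ψ : FreeGroup (Fin m) →* {x : ℕ // x < d} := FreeGroup.lift f with hψdef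
  have hle : π.ker ≤ ψ.ker := by
    intro x hx
    rw [MonoidHom.mem_ker] at hx ⊢
    have h1 : evalWord X x.toWord = 1 := by
      rw [← evalWord_eq_lift_mk X, FreeGroup.mk_toWord]
      exact hx
    have h2 := hker _ h1
    rw [hbridge] at h2
    have h3 : evalWord f x.toWord = 1 := Subtype.ext (h2.trans hone.symm)
    conv_lhs => rw [← FreeGroup.mk_toWord (x := x)]
    rw [hψdef, evalWord_eq_lift_mk f x.toWord]
    exact h3
  set φ : G →* {x : ℕ // x < d} := π.liftOfRightInverse (Function.surjInv hπ)
    (Function.rightInverse_surjInv hπ) ⟨ψ, hle⟩ with hφdef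
  have hφπ : ∀ x, φ (π x) = ψ x := fun x =>
    MonoidHom.liftOfRightInverse_comp_apply _ _ _ _ x
  refine ⟨φ.ker, MonoidHom.normal_ker φ, ?_, ?_, ?_⟩
  · rw [Subgroup.index_ker]
    exact Nat.card_pos.ne'
  · rw [Subgroup.index_ker]
    have h5 := Nat.card_le_card_of_injective
      (fun x : φ.range => (x : {x : ℕ // x < d})) Subtype.val_injective
    omega
  · intro w hw hmemk
    rw [MonoidHom.mem_ker] at hmemk
    have hq : evalWord X w = π (FreeGroup.mk w) := (evalWord_eq_lift_mk X w).symm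
    rw [hq, hφπ, hψdef, evalWord_eq_lift_mk f w] at hmemk
    apply hw
    rw [hbridge, hmemk, hone]
end RhoAux3
namespace RhoAux4
open RhoAux RhoAux2 RhoAux3

/-- Boolean test that `t` is a group table. -/
def isGT (d : ℕ) (t : List ℕ) : Bool :=
  (t.length == d * d) && ((t.all fun x => decide (x < d)) &&
  ((List.range d).all fun a =>
    ((mulT d t 0 a == a) && (mulT d t a 0 == a)) &&
    (((List.range d).all fun b => (List.range d).all fun c =>
      mulT d t (mulT d t a b) c == mulT d t a (mulT d t b c)) &&
    ((List.range d).any fun b => (mulT d t a b == 0) && (mulT d t b a == 0)))))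

lemma isGT_iff {d : ℕ} {t : List ℕ} : isGT d t = true ↔ GTP d t := by
  unfold isGT GTP
  simp only [Bool.and_eq_true, List.all_eq_true, List.any_eq_true, List.mem_range,
    beq_iff_eq, decide_eq_true_eq]

/-- The McKinsey-style check: every group of order at most `k` together with a
candidate assignment of generators either kills `w` or is refuted by a relator
in `L`. -/
def check2 {m : ℕ} (w : List (Fin m × Bool)) (k : ℕ)
    (L : List (List (Fin m × Bool))) : Bool :=
  (List.range (k + 1)).all fun d =>
    (allLists d (d * d)).all fun t =>
      !(isGT d t) || ((allLists d m).all fun fl =>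
        (evalT d t fl w == 0) || (L.any fun u => !(evalT d t fl u == 0)))

lemma check2_iff {m : ℕ} (w : List (Fin m × Bool)) (k : ℕ)
    (L : List (List (Fin m × Bool))) :
    check2 w k L = true ↔
    ∀ d, d ≤ k → ∀ t : List ℕ, GTP d t → ∀ fl : List ℕ, fl.length = m →
      (∀ x ∈ fl, x < d) →
      (evalT d t fl w = 0 ∨ ∃ u ∈ L, evalT d t fl u ≠ 0) := by
  unfold check2
  constructor
  · intro h d hd t hGT fl hfl1 hfl2
    have h1 := List.all_eq_true.mp h d (List.mem_range.mpr (by omega))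
    have h2 := List.all_eq_true.mp h1 t (mem_allLists.mpr ⟨hGT.1, hGT.2.1⟩)
    rw [Bool.or_eq_true] at h2
    rcases h2 with h2 | h2
    · exact absurd (isGT_iff.mpr hGT) (by simpa using h2)
    · have h3 := List.all_eq_true.mp h2 fl (mem_allLists.mpr ⟨hfl1, hfl2⟩)
      rw [Bool.or_eq_true] at h3
      rcases h3 with h3 | h3
      · exact .inl (by simpa using h3)
      · rcases List.any_eq_true.mp h3 with ⟨u, hu, hb⟩
        exact .inr ⟨u, hu, by simpa using hb⟩
  · intro h
    refine List.all_eq_true.mpr fun d hd => List.all_eq_true.mpr fun t ht => ?_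
    rw [Bool.or_eq_true]
    by_cases hGT : isGT d t = true
    · right
      refine List.all_eq_true.mpr fun fl hfl => ?_
      rw [Bool.or_eq_true]
      obtain ⟨hfl1, hfl2⟩ := mem_allLists.mp hfl
      rcases h d (by have := List.mem_range.mp hd; omega) t (isGT_iff.mp hGT)
          fl hfl1 hfl2 with h0 | ⟨u, hu, hune⟩
      · exact .inl (by simpa using h0)
      · exact .inr (List.any_eq_true.mpr ⟨u, hu, by simpa using hune⟩)
    · left
      simpa using hGT

lemma evalT_d_zero {m : ℕ} (t fl : List ℕ) (ht : t.length = 0)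
    (w : List (Fin m × Bool)) : evalT 0 t fl w = 0 := by
  have ht0 : t = [] := List.length_eq_zero_iff.mp ht
  subst ht0
  show List.foldl _ 0 w = 0
  induction w with
  | nil => rfl
  | cons p w ih =>
    rw [List.foldl_cons]
    have h0 : mulT 0 [] 0 (if p.2 then fl.getD p.1 0 else invT 0 [] (fl.getD p.1 0)) = 0 := by
      simp [mulT]
    rw [h0]
    exact ih

/-- The main combinatorial characterization. -/
theorem main_iff {G : Type*} [Group G] {m : ℕ} (X : Fin m → G)
    (hgen : Subgroup.closure (Set.range X) = ⊤) (hRF : ResiduallyFinite G)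
    (w : List (Fin m × Bool)) (k : ℕ) :
    k < rhoDepth X w ↔
      (k = 0 ∨ (evalWord X w ≠ 1 ∧ ∃ L : List (List (Fin m × Bool)),
        (∀ u ∈ L, evalWord X u = 1) ∧ check2 w k L = true)) := by
  classical
  by_cases h1 : evalWord X w = 1
  · have hr : rhoDepth X w = 1 := by simp [rhoDepth, h1]
    rw [hr]
    constructor
    · intro hk
      left
      omega
    · rintro (rfl | ⟨hne, -⟩)
      · omega
      · exact absurd h1 hne
  · have hr : rhoDepth X w = rfDepth (evalWord X w) := by simp [rhoDepth, h1]
    rw [hr]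
    have hrf : rfDepth (evalWord X w) =
        sInf {d : ℕ | d ≠ 0 ∧ ∃ N : Subgroup G, N.Normal ∧ evalWord X w ∉ N ∧ N.index = d} :=
      rfl
    set S := {d : ℕ | d ≠ 0 ∧ ∃ N : Subgroup G, N.Normal ∧ evalWord X w ∉ N ∧ N.index = d}
      with hSdef
    have hS : S.Nonempty := by
      obtain ⟨N, hnorm, hne, hnm⟩ := hRF (evalWord X w) h1
      exact ⟨N.index, hne, N, hnorm, hnm, rfl⟩
    have hlt : k < sInf S ↔ ∀ dd ∈ S, k < dd :=
      ⟨fun h dd hdd => lt_of_lt_of_le h (Nat.sInf_le hdd),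
       fun h => h _ (Nat.sInf_mem hS)⟩
    rw [hrf]
    constructor
    · intro hk
      right
      refine ⟨h1, ?_⟩
      set T : List (ℕ × List ℕ × List ℕ) :=
        (List.range (k + 1)).flatMap fun d =>
          (allLists d (d * d)).flatMap fun t =>
            (allLists d m).map fun fl => (d, t, fl) with hT
      set R : ℕ × List ℕ × List ℕ → Option (List (Fin m × Bool)) := fun trip =>
        if h : ∃ u : List (Fin m × Bool),
            evalWord X u = 1 ∧ evalT trip.1 trip.2.1 trip.2.2 u ≠ 0 then
          some h.choose
        else none with hR
      refine ⟨T.filterMap R, ?_, ?_⟩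
      · intro u hu
        rcases List.mem_filterMap.mp hu with ⟨trip, -, hru⟩
        rw [hR] at hru
        dsimp only at hru
        split at hru
        · next hex =>
          cases hru
          exact hex.choose_spec.1
        · exact absurd hru (by simp)
      · rw [check2_iff]
        intro d hd t hGT fl hfl1 hfl2
        by_cases href : ∃ u : List (Fin m × Bool),
            evalWord X u = 1 ∧ evalT d t fl u ≠ 0
        · right
          refine ⟨href.choose, ?_, href.choose_spec.2⟩
          apply List.mem_filterMap.mpr
          refine ⟨(d, t, fl), ?_, ?_⟩
          · rw [hT]
            apply List.mem_flatMap.mpr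
            refine ⟨d, List.mem_range.mpr (by omega), ?_⟩
            apply List.mem_flatMap.mpr
            refine ⟨t, mem_allLists.mpr ⟨hGT.1, hGT.2.1⟩, ?_⟩
            exact List.mem_map.mpr ⟨fl, mem_allLists.mpr ⟨hfl1, hfl2⟩, rfl⟩
          · rw [hR]
            exact dif_pos href
        · left
          by_cases hd0 : d = 0
          · subst hd0
            exact evalT_d_zero t fl hGT.1 w
          · by_contra hw0
            push_neg at href
            obtain ⟨N, hnorm, hne, hled, hdet⟩ :=
              subgroup_of_table X hgen (Nat.pos_of_ne_zero hd0) hGT hfl1 hfl2 href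
            have hmemS : N.index ∈ S := ⟨hne, N, hnorm, hdet w hw0, rfl⟩
            have := hlt.mp hk _ hmemS
            omega
    · rintro (rfl | ⟨-, L, hL1, hL2⟩)
      · have := Nat.sInf_mem hS
        exact Nat.pos_of_ne_zero this.1
      · rw [hlt]
        intro dd hdd
        rcases hdd with ⟨hdd0, N, hnorm, hnmem, hidx⟩
        by_contra hgt
        push_neg at hgt
        obtain ⟨t, fl, hGT, hfl1, hfl2, hiff⟩ := table_of_quotient X N hnorm hidx hdd0
        rcases (check2_iff w k L).mp hL2 dd hgt t hGT fl hfl1 hfl2 with h0 | ⟨u, hu, hune⟩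
        · exact hnmem ((hiff w).mp h0)
        · exact hune ((hiff u).mpr (hL1 u hu ▸ N.one_mem))

end RhoAux4
namespace RhoAux5
open Nat.Partrec.Code

/-- Every r.e. predicate has a primitive recursive, monotone verifier. -/
lemma re_verifier {α : Type*} [Primcodable α] {p : α → Prop} (h : REPred p) :
    ∃ V : α → ℕ → Bool, Primrec₂ V ∧
      (∀ a s₁ s₂, s₁ ≤ s₂ → V a s₁ = true → V a s₂ = true) ∧
      (∀ a, p a ↔ ∃ s, V a s = true) := by
  obtain ⟨c, hc⟩ := exists_code.1 h
  refine ⟨fun a s => (evaln s c (Encodable.encode a)).isSome, ?_, ?_, ?_⟩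
  · exact Primrec.option_isSome.comp (primrec_evaln.comp
      (Primrec.pair (Primrec.pair Primrec.snd (Primrec.const c))
        (Primrec.encode.comp Primrec.fst)))
  · intro a s₁ s₂ hs hv
    rw [Option.isSome_iff_exists] at hv ⊢
    obtain ⟨x, hx⟩ := hv
    exact ⟨x, evaln_mono hs hx⟩
  · intro a
    have hdom : p a ↔ (eval c (Encodable.encode a)).Dom := by
      rw [hc]
      simp [Encodable.encodek, Part.assert]
    rw [hdom, Part.dom_iff_mem]
    constructor
    · rintro ⟨x, hx⟩
      obtain ⟨s, hs⟩ := evaln_complete.1 hx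
      exact ⟨s, Option.isSome_iff_exists.mpr ⟨x, hs⟩⟩
    · rintro ⟨s, hs⟩
      obtain ⟨x, hx⟩ := Option.isSome_iff_exists.mp hs
      exact ⟨x, evaln_sound hx⟩

/-- A predicate with primrec-verifiable certificates is r.e. -/
lemma repred_of_exists {α σ : Type*} [Primcodable α] [Primcodable σ]
    {p : α → Prop} (D : α → σ → Bool) (hD : Primrec₂ D)
    (hp : ∀ a, p a ↔ ∃ c, D a c = true) : REPred p := by
  classical
  have hf : Computable₂ (fun (a : α) (n : ℕ) =>
      (Encodable.decode (α := σ) n).bind fun c => (bif D a c then some () else none)) := by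
    apply Computable.option_bind
    · exact (Computable.decode).comp Computable.snd
    · exact Computable.cond (hD.to_comp.comp (Computable.fst.comp Computable.fst)
        Computable.snd) (Computable.const (some ())) (Computable.const none)
  have hpart := Partrec.rfindOpt hf
  unfold REPred
  apply hpart.of_eq
  intro a
  apply Part.ext'
  · rw [Nat.rfindOpt_dom]
    show _ ↔ (Part.assert (p a) fun _ => Part.some ()).Dom
    constructor
    · rintro ⟨n, u, hu⟩
      rw [Option.mem_def] at hu
      rcases Option.bind_eq_some_iff.mp hu with ⟨c, hc, hcv⟩
      have hex : ∃ c, D a c = true := by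
        cases hD' : D a c
        · rw [hD'] at hcv; simp at hcv
        · exact ⟨c, hD'⟩
      exact ⟨(hp a).mpr hex, trivial⟩
    · intro hdom
      rcases hdom with ⟨hpa, -⟩
      obtain ⟨c, hc⟩ := (hp a).mp hpa
      refine ⟨Encodable.encode c, (), ?_⟩
      rw [Option.mem_def]
      simp [Encodable.encodek, hc]
  · intro h1 h2
    exact Subsingleton.elim _ _

end RhoAux5
namespace RhoAux6
open RhoAux RhoAux4

lemma primrec_list_all {α β : Type*} [Primcodable α] [Primcodable β]
    {f : α → List β} {p : α → β → Bool} (hf : Primrec f) (hp : Primrec₂ p) :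
    Primrec fun a => (f a).all (p a) := by
  have h := Primrec.list_foldr hf (Primrec.const true)
    ((Primrec.and.comp (hp.comp Primrec.fst (Primrec.fst.comp Primrec.snd))
      (Primrec.snd.comp Primrec.snd)).to₂)
  apply h.of_eq
  intro a
  induction f a with
  | nil => rfl
  | cons b l ih => simp [List.all_cons, ← ih]

lemma primrec_list_any {α β : Type*} [Primcodable α] [Primcodable β]
    {f : α → List β} {p : α → β → Bool} (hf : Primrec f) (hp : Primrec₂ p) :
    Primrec fun a => (f a).any (p a) := by
  have h := Primrec.list_foldr hf (Primrec.const false)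
    ((Primrec.or.comp (hp.comp Primrec.fst (Primrec.fst.comp Primrec.snd))
      (Primrec.snd.comp Primrec.snd)).to₂)
  apply h.of_eq
  intro a
  induction f a with
  | nil => rfl
  | cons b l ih => simp [List.any_cons, ← ih]

lemma primrec_mulT : Primrec fun x : (ℕ × List ℕ) × ℕ × ℕ =>
    mulT x.1.1 x.1.2 x.2.1 x.2.2 :=
  (Primrec.list_getD 0).comp (Primrec.snd.comp Primrec.fst)
    (Primrec.nat_add.comp
      (Primrec.nat_mul.comp (Primrec.fst.comp Primrec.snd) (Primrec.fst.comp Primrec.fst))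
      (Primrec.snd.comp Primrec.snd))

lemma primrec_invT : Primrec fun x : (ℕ × List ℕ) × ℕ => invT x.1.1 x.1.2 x.2 := by
  have h := Primrec.list_foldl
    (f := fun x : (ℕ × List ℕ) × ℕ => List.range (x.1.1 - 1))
    (g := fun _ => (0 : ℕ))
    (h := fun x sb => mulT x.1.1 x.1.2 sb.1 x.2)
    (Primrec.list_range.comp
      (Primrec.nat_sub.comp (Primrec.fst.comp Primrec.fst) (Primrec.const 1)))
    (Primrec.const 0)
    ((primrec_mulT.comp (Primrec.pair (Primrec.fst.comp Primrec.fst)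
      (Primrec.pair (Primrec.fst.comp Primrec.snd) (Primrec.snd.comp Primrec.fst)))).to₂)
  exact h.of_eq fun x => rfl

lemma primrec_evalT {m : ℕ} :
    Primrec fun x : ((ℕ × List ℕ) × List ℕ) × List (Fin m × Bool) =>
      evalT x.1.1.1 x.1.1.2 x.1.2 x.2 := by
  have hd := Primrec.fst.comp (Primrec.fst.comp
    (Primrec.fst.comp (Primrec.fst
      (α := ((ℕ × List ℕ) × List ℕ) × List (Fin m × Bool)) (β := ℕ × Fin m × Bool))))
  have ht := Primrec.snd.comp (Primrec.fst.comp
    (Primrec.fst.comp (Primrec.fst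
      (α := ((ℕ × List ℕ) × List ℕ) × List (Fin m × Bool)) (β := ℕ × Fin m × Bool))))
  have hfl := Primrec.snd.comp (Primrec.fst.comp
    (Primrec.fst (α := ((ℕ × List ℕ) × List ℕ) × List (Fin m × Bool)) (β := ℕ × Fin m × Bool)))
  have hacc := Primrec.fst.comp (Primrec.snd
    (α := ((ℕ × List ℕ) × List ℕ) × List (Fin m × Bool)) (β := ℕ × Fin m × Bool))
  have hi := Primrec.fst.comp (Primrec.snd.comp (Primrec.snd
    (α := ((ℕ × List ℕ) × List ℕ) × List (Fin m × Bool)) (β := ℕ × Fin m × Bool)))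
  have hb := Primrec.snd.comp (Primrec.snd.comp (Primrec.snd
    (α := ((ℕ × List ℕ) × List ℕ) × List (Fin m × Bool)) (β := ℕ × Fin m × Bool)))
  have hgetD := (Primrec.list_getD 0).comp hfl (Primrec.fin_val.comp hi)
  have hinv := primrec_invT.comp (Primrec.pair (Primrec.pair hd ht) hgetD)
  have hcond := Primrec.cond hb hgetD hinv
  have hstep := primrec_mulT.comp
    (Primrec.pair (Primrec.pair hd ht) (Primrec.pair hacc hcond))
  have h := Primrec.list_foldl
    (f := fun x : ((ℕ × List ℕ) × List ℕ) × List (Fin m × Bool) => x.2)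
    (g := fun _ => (0 : ℕ))
    (h := fun x sp => mulT x.1.1.1 x.1.1.2 sp.1
      (bif sp.2.2 then x.1.2.getD sp.2.1 0 else invT x.1.1.1 x.1.1.2 (x.1.2.getD sp.2.1 0)))
    Primrec.snd (Primrec.const 0) hstep.to₂
  apply h.of_eq
  intro x
  unfold evalT
  congr 1
  funext acc p
  simp only [Bool.cond_eq_ite]

lemma primrec_allLists : Primrec fun p : ℕ × ℕ => allLists p.1 p.2 := by
  have hg : Primrec₂ fun (q : (ℕ × ℕ) × ℕ × List (List ℕ)) (x : ℕ) =>
      q.2.2.map (x :: ·) :=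
    Primrec.list_map (Primrec.snd.comp (Primrec.snd.comp Primrec.fst))
      ((Primrec.list_cons.comp (Primrec.snd.comp Primrec.fst) Primrec.snd).to₂)
  have hh : Primrec₂ fun (p : ℕ × ℕ) (q : ℕ × List (List ℕ)) =>
      (List.range p.1).flatMap fun x => q.2.map (x :: ·) :=
    (Primrec.list_flatMap
      (Primrec.list_range.comp (Primrec.fst.comp Primrec.fst)) hg).to₂
  have h := Primrec.nat_rec' (f := fun p : ℕ × ℕ => p.2)
    (g := fun _ : ℕ × ℕ => ([[]] : List (List ℕ)))
    Primrec.snd (Primrec.const [[]]) hh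
  exact h.of_eq fun p => rfl

lemma primrec_isGT : Primrec fun x : ℕ × List ℕ => isGT x.1 x.2 := by
  have h1 : Primrec fun x : ℕ × List ℕ => x.2.length == x.1 * x.1 :=
    Primrec.beq.comp (Primrec.list_length.comp Primrec.snd)
      (Primrec.nat_mul.comp Primrec.fst Primrec.fst)
  have h2 : Primrec fun x : ℕ × List ℕ => x.2.all fun y => decide (y < x.1) :=
    primrec_list_all Primrec.snd
      ((Primrec.nat_lt.comp Primrec.snd (Primrec.fst.comp Primrec.fst)).decide.to₂)
  -- context γ1 = (ℕ × List ℕ) × ℕ  (pair, a)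
  have d1 := Primrec.fst.comp (Primrec.fst (α := ℕ × List ℕ) (β := ℕ))
  have t1 := Primrec.snd.comp (Primrec.fst (α := ℕ × List ℕ) (β := ℕ))
  have a1 := Primrec.snd (α := ℕ × List ℕ) (β := ℕ)
  have i1 := Primrec.beq.comp
    (primrec_mulT.comp (Primrec.pair (Primrec.pair d1 t1)
      (Primrec.pair (Primrec.const 0) a1))) a1
  have i2 := Primrec.beq.comp
    (primrec_mulT.comp (Primrec.pair (Primrec.pair d1 t1)
      (Primrec.pair a1 (Primrec.const 0)))) a1
  -- context γ3 = (((ℕ × List ℕ) × ℕ) × ℕ) × ℕ  (…, b, c)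
  have d3 := Primrec.fst.comp (Primrec.fst.comp (Primrec.fst.comp
    (Primrec.fst (α := ((ℕ × List ℕ) × ℕ) × ℕ) (β := ℕ))))
  have t3 := Primrec.snd.comp (Primrec.fst.comp (Primrec.fst.comp
    (Primrec.fst (α := ((ℕ × List ℕ) × ℕ) × ℕ) (β := ℕ))))
  have a3 := Primrec.snd.comp (Primrec.fst.comp
    (Primrec.fst (α := ((ℕ × List ℕ) × ℕ) × ℕ) (β := ℕ)))
  have b3 := Primrec.snd.comp (Primrec.fst (α := ((ℕ × List ℕ) × ℕ) × ℕ) (β := ℕ))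
  have c3 := Primrec.snd (α := ((ℕ × List ℕ) × ℕ) × ℕ) (β := ℕ)
  have mab := primrec_mulT.comp (Primrec.pair (Primrec.pair d3 t3) (Primrec.pair a3 b3))
  have mbc := primrec_mulT.comp (Primrec.pair (Primrec.pair d3 t3) (Primrec.pair b3 c3))
  have lhs3 := primrec_mulT.comp (Primrec.pair (Primrec.pair d3 t3) (Primrec.pair mab c3))
  have rhs3 := primrec_mulT.comp (Primrec.pair (Primrec.pair d3 t3) (Primrec.pair a3 mbc))
  have inner3 := Primrec.beq.comp lhs3 rhs3
  -- context γ2 = ((ℕ × List ℕ) × ℕ) × ℕ  (…, b)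
  have d2 := Primrec.fst.comp (Primrec.fst.comp
    (Primrec.fst (α := (ℕ × List ℕ) × ℕ) (β := ℕ)))
  have t2 := Primrec.snd.comp (Primrec.fst.comp
    (Primrec.fst (α := (ℕ × List ℕ) × ℕ) (β := ℕ)))
  have a2 := Primrec.snd.comp (Primrec.fst (α := (ℕ × List ℕ) × ℕ) (β := ℕ))
  have b2 := Primrec.snd (α := (ℕ × List ℕ) × ℕ) (β := ℕ)
  have allc := primrec_list_all (Primrec.list_range.comp d2) inner3.to₂
  have allbc := primrec_list_all (Primrec.list_range.comp d1) allc.to₂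
  have inner2 := Primrec.and.comp
    (Primrec.beq.comp (primrec_mulT.comp (Primrec.pair (Primrec.pair d2 t2)
      (Primrec.pair a2 b2))) (Primrec.const 0))
    (Primrec.beq.comp (primrec_mulT.comp (Primrec.pair (Primrec.pair d2 t2)
      (Primrec.pair b2 a2))) (Primrec.const 0))
  have anyb := primrec_list_any (Primrec.list_range.comp d1) inner2.to₂
  have inner1 := Primrec.and.comp (Primrec.and.comp i1 i2) (Primrec.and.comp allbc anyb)
  have total := Primrec.and.comp h1 (Primrec.and.comp h2
    (primrec_list_all (Primrec.list_range.comp Primrec.fst) inner1.to₂))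
  exact total.of_eq fun x => rfl

lemma primrec_check2 {m : ℕ} :
    Primrec fun x : (List (Fin m × Bool) × ℕ) × List (List (Fin m × Bool)) =>
      check2 x.1.1 x.1.2 x.2 := by
  -- base type
  set A := (List (Fin m × Bool) × ℕ) × List (List (Fin m × Bool)) with hA
  -- γ1 = A × ℕ (d)
  have w1 := Primrec.fst.comp (Primrec.fst.comp (Primrec.fst (α := A) (β := ℕ)))
  have d1 := Primrec.snd (α := A) (β := ℕ)
  -- γ2 = (A × ℕ) × List ℕ (t)
  have w2 := w1.comp (Primrec.fst (α := A × ℕ) (β := List ℕ))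
  have L2 := Primrec.snd.comp (Primrec.fst.comp (Primrec.fst (α := A × ℕ) (β := List ℕ)))
  have d2 := Primrec.snd.comp (Primrec.fst (α := A × ℕ) (β := List ℕ))
  have t2 := Primrec.snd (α := A × ℕ) (β := List ℕ)
  -- γ3 = ((A × ℕ) × List ℕ) × List ℕ (fl)
  have w3 := w2.comp (Primrec.fst (α := (A × ℕ) × List ℕ) (β := List ℕ))
  have L3 := L2.comp (Primrec.fst (α := (A × ℕ) × List ℕ) (β := List ℕ))
  have d3 := d2.comp (Primrec.fst (α := (A × ℕ) × List ℕ) (β := List ℕ))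
  have t3 := t2.comp (Primrec.fst (α := (A × ℕ) × List ℕ) (β := List ℕ))
  have fl3 := Primrec.snd (α := (A × ℕ) × List ℕ) (β := List ℕ)
  -- γ4 = (((A × ℕ) × List ℕ) × List ℕ) × List (Fin m × Bool) (u)
  have d4 := d3.comp (Primrec.fst (α := ((A × ℕ) × List ℕ) × List ℕ)
    (β := List (Fin m × Bool)))
  have t4 := t3.comp (Primrec.fst (α := ((A × ℕ) × List ℕ) × List ℕ)
    (β := List (Fin m × Bool)))
  have fl4 := fl3.comp (Primrec.fst (α := ((A × ℕ) × List ℕ) × List ℕ)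
    (β := List (Fin m × Bool)))
  have u4 := Primrec.snd (α := ((A × ℕ) × List ℕ) × List ℕ) (β := List (Fin m × Bool))
  have hval4 := primrec_evalT.comp
    (Primrec.pair (Primrec.pair (Primrec.pair d4 t4) fl4) u4)
  have inner4 := Primrec.not.comp (Primrec.beq.comp hval4 (Primrec.const 0))
  have hanyU := primrec_list_any L3 inner4.to₂
  have hvalw := primrec_evalT.comp
    (Primrec.pair (Primrec.pair (Primrec.pair d3 t3) fl3) w3)
  have inner3 := Primrec.or.comp (Primrec.beq.comp hvalw (Primrec.const 0)) hanyU
  have hallfl := primrec_list_all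
    (primrec_allLists.comp (Primrec.pair d2 (Primrec.const m))) inner3.to₂
  have hGT2 := Primrec.not.comp (primrec_isGT.comp (Primrec.pair d2 t2))
  have inner2 := Primrec.or.comp hGT2 hallfl
  have hallt := primrec_list_all
    (primrec_allLists.comp (Primrec.pair d1 (Primrec.nat_mul.comp d1 d1))) inner2.to₂
  have total := primrec_list_all
    (Primrec.list_range.comp (Primrec.succ.comp (Primrec.snd.comp Primrec.fst))) hallt.to₂
  exact total.of_eq fun x => rfl

end RhoAux6

namespace RhoAux7

lemma list_bound {W : Type*} (rV : W → ℕ → Bool)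
    (mono : ∀ u s₁ s₂, s₁ ≤ s₂ → rV u s₁ = true → rV u s₂ = true)
    (L : List W) (h : ∀ u ∈ L, ∃ s, rV u s = true) :
    ∃ s, ∀ u ∈ L, rV u s = true := by
  induction L with
  | nil => exact ⟨0, by simp⟩
  | cons a L ih =>
    obtain ⟨s1, hs1⟩ := h a (List.mem_cons_self)
    obtain ⟨s2, hs2⟩ := ih fun u hu => h u (List.mem_cons_of_mem _ hu)
    refine ⟨max s1 s2, fun u hu => ?_⟩
    rcases List.mem_cons.mp hu with rfl | hu
    · exact mono _ _ _ (le_max_left _ _) hs1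
    · exact mono _ _ _ (le_max_right _ _) (hs2 u hu)

end RhoAux7

/-- 'only if' direction of Theorem 1.4. Let `G = ⟨X⟩` be a
finitely generated residually finite group with recursively enumerable
presentation (i.e. the words representing `1` form an r.e. set) and decidable
word problem. Then the individual residual finiteness depth function `ρ` is
left-computable: `{ (w,k) : ρ(w) > k }` is recursively enumerable. -/
theorem rho_leftComputable_of_decidable_wp {G : Type*} [Group G] {m : ℕ}
    (X : Fin m → G) (hgen : Subgroup.closure (Set.range X) = ⊤)
    (hRF : ResiduallyFinite G)
    (hre : REPred (fun w : List (Fin m × Bool) => evalWord X w = 1))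
    (hwp : ComputablePred (fun w : List (Fin m × Bool) => evalWord X w = 1)) :
    LeftComputable (rhoDepth X) := by
  classical
  unfold LeftComputable
  obtain ⟨nV, hnVp, hnVmono, hnViff⟩ := RhoAux5.re_verifier ((ComputablePred.not hwp).to_re)
  obtain ⟨rV, hrVp, hrVmono, hrViff⟩ := RhoAux5.re_verifier hre
  set D : (List (Fin m × Bool) × ℕ) → (ℕ × List (List (Fin m × Bool))) → Bool :=
    fun x c => (x.2 == 0) ||
      (nV x.1 c.1 && ((c.2.all fun u => rV u c.1) && RhoAux4.check2 x.1 x.2 c.2)) with hD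
  apply RhoAux5.repred_of_exists D ?hprim ?hiff
  case hiff =>
    intro x
    rw [RhoAux4.main_iff X hgen hRF x.1 x.2]
    constructor
    · rintro (h0 | ⟨hne, L, hL1, hL2⟩)
      · exact ⟨(0, []), by simp [hD, h0]⟩
      · obtain ⟨s1, hs1⟩ := (hnViff x.1).mp hne
        obtain ⟨s2, hs2⟩ := RhoAux7.list_bound rV hrVmono L
          (fun u hu => (hrViff u).mp (hL1 u hu))
        refine ⟨(max s1 s2, L), ?_⟩
        rw [hD]
        simp only [Bool.or_eq_true, Bool.and_eq_true]
        right
        refine ⟨hnVmono _ _ _ (le_max_left _ _) hs1, ?_, hL2⟩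
        exact List.all_eq_true.mpr fun u hu => hrVmono _ _ _ (le_max_right _ _) (hs2 u hu)
    · rintro ⟨⟨s, L⟩, hc⟩
      rw [hD] at hc
      simp only [Bool.or_eq_true, Bool.and_eq_true] at hc
      rcases hc with h0 | ⟨hnv, hall, hchk⟩
      · left
        simpa using h0
      · right
        exact ⟨(hnViff x.1).mpr ⟨s, hnv⟩, L,
          fun u hu => (hrViff u).mpr ⟨s, List.all_eq_true.mp hall u hu⟩, hchk⟩
  case hprim =>
    have hk := Primrec.snd.comp (Primrec.fst
      (α := List (Fin m × Bool) × ℕ) (β := ℕ × List (List (Fin m × Bool))))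
    have hw := Primrec.fst.comp (Primrec.fst
      (α := List (Fin m × Bool) × ℕ) (β := ℕ × List (List (Fin m × Bool))))
    have hs := Primrec.fst.comp (Primrec.snd
      (α := List (Fin m × Bool) × ℕ) (β := ℕ × List (List (Fin m × Bool))))
    have hL := Primrec.snd.comp (Primrec.snd
      (α := List (Fin m × Bool) × ℕ) (β := ℕ × List (List (Fin m × Bool))))
    have p1 := Primrec.beq.comp hk (Primrec.const 0)
    have p2 := hnVp.comp hw hs
    have p3 := RhoAux6.primrec_list_all hL
      ((hrVp.comp Primrec.snd (hs.comp Primrec.fst)).to₂)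
    have p4 := RhoAux6.primrec_check2.comp (Primrec.pair (Primrec.pair hw hk) hL)
    have tot := Primrec.or.comp p1 (Primrec.and.comp p2 (Primrec.and.comp p3 p4))
    exact tot.to₂
end
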